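/- arXiv:1707.01233 — 12 statements merged into one kernel-verified Lean document; each statement's English description precedes it below -/
import Mathlib

section
/- (Theorem of Apollonius.) Let n ≥ 1, let a_1, …, a_n > 0, and let x¹, …, xⁿ ∈ ℝⁿ be a complete system of conjugate semi-diameters of the ellipsoid Σ_{k=1}^n x_k²/a_k² = 1. For each k ∈ {1, …, n} define v_k := Σ_{S ⊆ {1,…,n}, |S| = k} det G_S, where G_S is the Gram matrix (⟨xⁱ, xʲ⟩)_{i,j ∈ S} of the vectors indexed by S. Then v_k = Σ_{S ⊆ {1,…,n}, |S| = k} Π_{i ∈ S} a_i², the k-th elementary symmetric polynomial of a_1², …, a_n²; in particular v_k does not depend on the choice of the complete conjugate system. -/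
open Matrix Finset in
private lemma aux_det_piecewise {m : Type*} [DecidableEq m] [Fintype m] {R : Type*} [CommRing R]
    (s : Finset m) (A : Matrix m m R) :
    Matrix.det (s.piecewise A (1 : Matrix m m R)) =
      Matrix.det (A.submatrix (Subtype.val : {i // i ∈ s} → m) Subtype.val) := by
  classical
  let e : {i // i ∈ s} ⊕ {i // i ∉ s} ≃ m := Equiv.sumCompl (· ∈ s)
  refine (Matrix.det_submatrix_equiv_self e _).symm.trans ?_
  have : (Matrix.submatrix (s.piecewise A (1 : Matrix m m R)) e e) =
      Matrix.fromBlocks (A.submatrix Subtype.val Subtype.val)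
        (A.submatrix Subtype.val Subtype.val) 0 1 := by
    ext i j
    cases i with
    | inl i =>
      cases j with
      | inl j =>
        show (s.piecewise A (1 : Matrix m m R)) (↑i) (↑j) = A ↑i ↑j
        exact congrFun (Finset.piecewise_eq_of_mem _ _ _ i.2) _
      | inr j =>
        show (s.piecewise A (1 : Matrix m m R)) (↑i) (↑j) = A ↑i ↑j
        exact congrFun (Finset.piecewise_eq_of_mem _ _ _ i.2) _
    | inr i =>
      cases j with
      | inl j =>
        show (s.piecewise A (1 : Matrix m m R)) (↑i) (↑j) = 0
        refine (congrFun (Finset.piecewise_eq_of_notMem _ _ _ i.2) _).trans ?_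
        exact Matrix.one_apply_ne (fun h => i.2 (by rw [h]; exact j.2))
      | inr j =>
        show (s.piecewise A (1 : Matrix m m R)) (↑i) (↑j)
            = (1 : Matrix {i // i ∉ s} {i // i ∉ s} R) i j
        refine (congrFun (Finset.piecewise_eq_of_notMem _ _ _ i.2) _).trans ?_
        simp [Matrix.one_apply, Subtype.ext_iff]
  rw [this, Matrix.det_fromBlocks_zero₂₁, Matrix.det_one, mul_one]

open Matrix Finset in
private lemma aux_det_one_add {m : Type*} [DecidableEq m] [Fintype m] {R : Type*} [CommRing R]
    (A : Matrix m m R) :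
    Matrix.det (1 + A) = ∑ s : Finset m,
      Matrix.det (A.submatrix (Subtype.val : {i // i ∈ s} → m) Subtype.val) := by
  rw [add_comm]
  calc Matrix.det (A + 1)
      = (Matrix.detRowAlternating (R := R) (n := m)).toMultilinearMap
          (A + (1 : Matrix m m R)) := rfl
    _ = ∑ s : Finset m, (Matrix.detRowAlternating (R := R) (n := m)).toMultilinearMap
          (s.piecewise A (1 : Matrix m m R)) :=
        (Matrix.detRowAlternating (R := R) (n := m)).toMultilinearMap.map_add_univ
          A (1 : Matrix m m R)
    _ = ∑ s : Finset m,
          Matrix.det (A.submatrix (Subtype.val : {i // i ∈ s} → m) Subtype.val) :=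
        Finset.sum_congr rfl fun s _ => aux_det_piecewise s A

open Matrix Finset Polynomial in
private lemma aux_key (n : ℕ) (d : Fin n → ℝ) (M : Matrix (Fin n) (Fin n) ℝ)
    (hMtM : Mᵀ * M = Matrix.diagonal d) :
    (1 + (Polynomial.X : ℝ[X]) • (M * Mᵀ).map Polynomial.C).det
      = (1 + (Polynomial.X : ℝ[X]) • (Matrix.diagonal d).map Polynomial.C).det := by
  have e1 : (Polynomial.X : ℝ[X]) • (M * Mᵀ).map Polynomial.C
      = ((Polynomial.X : ℝ[X]) • M.map Polynomial.C) * (M.map Polynomial.C)ᵀ := by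
    rw [Matrix.map_mul (f := Polynomial.C), Matrix.transpose_map, Matrix.smul_mul]
  have e2 : (M.map Polynomial.C)ᵀ * ((Polynomial.X : ℝ[X]) • M.map Polynomial.C)
      = (Polynomial.X : ℝ[X]) • (Matrix.diagonal d).map Polynomial.C := by
    rw [Matrix.mul_smul, ← Matrix.transpose_map, ← Matrix.map_mul (f := Polynomial.C), hMtM]
  rw [e1, Matrix.det_one_add_mul_comm, e2]

open Matrix Finset Polynomial in
private lemma aux_coeff (n k : ℕ) (c : Finset (Fin n) → ℝ) :
    (∑ s : Finset (Fin n), Polynomial.C (c s) * (Polynomial.X : ℝ[X]) ^ s.card).coeff k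
      = ∑ s ∈ Finset.univ.powersetCard k, c s := by
  rw [Polynomial.finset_sum_coeff]
  simp only [Polynomial.coeff_C_mul_X_pow]
  rw [Finset.powersetCard_eq_filter, Finset.powerset_univ, Finset.sum_filter]
  exact Finset.sum_congr rfl fun s _ => if_congr eq_comm rfl rfl

open Matrix Finset Polynomial in
private lemma aux_expand' (n : ℕ) (B : Matrix (Fin n) (Fin n) ℝ) (s : Finset (Fin n)) :
    (((Polynomial.X : ℝ[X]) • B.map Polynomial.C).submatrix
        (Subtype.val : {i // i ∈ s} → Fin n) Subtype.val).det
      = Polynomial.C ((B.submatrix (Subtype.val : {i // i ∈ s} → Fin n) Subtype.val).det)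
          * (Polynomial.X : ℝ[X]) ^ s.card := by
  have h1 : ((Polynomial.X : ℝ[X]) • B.map Polynomial.C).submatrix
      (Subtype.val : {i // i ∈ s} → Fin n) Subtype.val
      = (Polynomial.X : ℝ[X]) • (B.submatrix (Subtype.val : {i // i ∈ s} → Fin n)
          (Subtype.val : {i // i ∈ s} → Fin n)).map Polynomial.C := rfl
  rw [h1, Matrix.det_smul, Polynomial.C.map_det, RingHom.mapMatrix_apply,
    Fintype.card_coe, mul_comm]

open Matrix Finset Polynomial in
private lemma aux_sum_det (n : ℕ) (B : Matrix (Fin n) (Fin n) ℝ) :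
    (1 + (Polynomial.X : ℝ[X]) • B.map Polynomial.C).det
      = ∑ s : Finset (Fin n),
          Polynomial.C ((B.submatrix (Subtype.val : {i // i ∈ s} → Fin n) Subtype.val).det)
            * (Polynomial.X : ℝ[X]) ^ s.card := by
  rw [aux_det_one_add]
  exact Finset.sum_congr rfl fun s _ => aux_expand' n B s

open Matrix Polynomial in
/-- Theorem of Apollonius: for a complete system of conjugate semi-diameters
`x¹, …, xⁿ` of the ellipsoid `∑ x_k² / a_k² = 1`, the sum of the determinants of
the Gram matrices of all `k`-element subfamilies equals the `k`-th elementary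
symmetric polynomial of `a_1², …, a_n²`; in particular it does not depend on the
choice of the conjugate system. -/
theorem apollonius_invariants
    (n : ℕ) (hn : 1 ≤ n) (a : Fin n → ℝ) (ha : ∀ i, 0 < a i)
    (x : Fin n → EuclideanSpace ℝ (Fin n))
    (hconj : ∀ i j : Fin n,
      ∑ k, x i k * x j k / (a k) ^ 2 = if i = j then 1 else 0)
    (k : ℕ) (hk1 : 1 ≤ k) (hkn : k ≤ n) :
    ∑ S ∈ Finset.univ.powersetCard k,
        Matrix.det (Matrix.of fun i j : {y : Fin n // y ∈ S} =>
          (inner ℝ (x ↑i) (x ↑j) : ℝ))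
      = ∑ S ∈ Finset.univ.powersetCard k, ∏ i ∈ S, (a i) ^ 2 := by
  classical
  set d : Fin n → ℝ := fun i => a i ^ 2 with hd
  set M : Matrix (Fin n) (Fin n) ℝ := Matrix.of fun i k => x i k with hM
  have hdne : ∀ i, d i ≠ 0 := fun i => pow_ne_zero 2 (ha i).ne'
  have hMw : M * (Matrix.diagonal (fun i => (d i)⁻¹) * Mᵀ) = 1 := by
    ext i j
    have h := hconj i j
    rw [← Matrix.mul_assoc, Matrix.mul_apply]
    simp only [Matrix.mul_diagonal, Matrix.transpose_apply,
      Matrix.one_apply, hM, Matrix.of_apply]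
    rw [← h]
    refine Finset.sum_congr rfl fun l _ => ?_
    field_simp
    rfl
  have hMtM : Mᵀ * M = Matrix.diagonal d := by
    have h2 : (Matrix.diagonal (fun i => (d i)⁻¹) * Mᵀ) * M = 1 :=
      mul_eq_one_comm.mp hMw
    have h3 : Matrix.diagonal d * ((Matrix.diagonal (fun i => (d i)⁻¹) * Mᵀ) * M)
        = Matrix.diagonal d := by rw [h2, mul_one]
    have h4 : Matrix.diagonal d * Matrix.diagonal (fun i => (d i)⁻¹)
        = (1 : Matrix (Fin n) (Fin n) ℝ) := by
      have he : (fun i => d i * (d i)⁻¹) = fun _ => (1 : ℝ) :=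
        funext fun i => mul_inv_cancel₀ (hdne i)
      rw [Matrix.diagonal_mul_diagonal, he, Matrix.diagonal_one]
    calc Mᵀ * M = (Matrix.diagonal d * Matrix.diagonal (fun i => (d i)⁻¹)) * (Mᵀ * M) := by
          rw [h4, one_mul]
      _ = Matrix.diagonal d := by rw [Matrix.mul_assoc, ← Matrix.mul_assoc _ Mᵀ M, h3]
  -- polynomial identity
  have key := aux_key n d M hMtM
  rw [aux_sum_det, aux_sum_det] at key
  have hcoeff := congrArg (fun p => Polynomial.coeff p k) key
  simp only [aux_coeff] at hcoeff
  -- identify the Gram matrices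
  have hinner : ∀ S : Finset (Fin n),
      (Matrix.of fun i j : {y : Fin n // y ∈ S} => (inner ℝ (x ↑i) (x ↑j) : ℝ))
        = (M * Mᵀ).submatrix (Subtype.val : {y : Fin n // y ∈ S} → Fin n) Subtype.val := by
    intro S
    ext i j
    simp [Matrix.mul_apply, PiLp.inner_apply, RCLike.inner_apply, hM]
    exact Finset.sum_congr rfl fun _ _ => mul_comm _ _
  have hdiag : ∀ S : Finset (Fin n),
      ((Matrix.diagonal d).submatrix (Subtype.val : {y : Fin n // y ∈ S} → Fin n)
        Subtype.val).det = ∏ i ∈ S, d i := by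
    intro S
    have h5 : (Matrix.diagonal d).submatrix (Subtype.val : {y : Fin n // y ∈ S} → Fin n)
        Subtype.val = Matrix.diagonal (fun i : {y : Fin n // y ∈ S} => d ↑i) := by
      ext i j
      rcases eq_or_ne i j with rfl | h
      · simp
      · rw [Matrix.diagonal_apply_ne _ h, Matrix.submatrix_apply,
          Matrix.diagonal_apply_ne _ (fun hh => h (Subtype.ext hh))]
    rw [h5, Matrix.det_diagonal, Finset.prod_coe_sort]
  calc ∑ S ∈ Finset.univ.powersetCard k,
        Matrix.det (Matrix.of fun i j : {y : Fin n // y ∈ S} =>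
          (inner ℝ (x ↑i) (x ↑j) : ℝ))
      = ∑ S ∈ Finset.univ.powersetCard k,
          ((M * Mᵀ).submatrix (Subtype.val : {y : Fin n // y ∈ S} → Fin n) Subtype.val).det :=
        Finset.sum_congr rfl fun S _ => by rw [hinner S]
    _ = ∑ S ∈ Finset.univ.powersetCard k,
          ((Matrix.diagonal d).submatrix (Subtype.val : {y : Fin n // y ∈ S} → Fin n)
            Subtype.val).det := hcoeff
    _ = ∑ S ∈ Finset.univ.powersetCard k, ∏ i ∈ S, (a i) ^ 2 :=
        Finset.sum_congr rfl fun S _ => hdiag S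
end

section
/- Let 0 < a_n < ⋯ < a_1 and let h ∈ ℝⁿ be nonzero. Set t(h) = (1 − Σ_i h_i² a_i²)/Σ_i h_i², assume a_i² + t(h) ≠ 0 for all i, and define P(h) ∈ ℝⁿ by P(h)_i = h_i (a_i² + t(h)); P(h) is the point at which the hyperplane {x : ⟨h, x⟩ = 1} touches the unique confocal quadric C(−t(h)) tangent to it. Let d₁(h) be the Euclidean distance from P(h) to the hyperplane {x : ⟨h, x⟩ = 0}, and let d₂(h) be the Euclidean distance from P(h) to the line ℝh. Then d₁(h)·d₂(h) = √( (Σ_i h_i²)(Σ_i h_i² a_i⁴) − (Σ_i h_i² a_i²)² ) / (Σ_i h_i²), and this product is invariant under replacing h by τh for any τ ≠ 0; consequently the points of contact of the parallel tangent hyperplanes with the confocal family lie on an equilateral hyperbola. -/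
open Finset Metric


lemma aux_infDist_ge {n : ℕ} (p : EuclideanSpace ℝ (Fin n))
    (s : Set (EuclideanSpace ℝ (Fin n))) (hs : s.Nonempty) (b : ℝ)
    (hb : ∀ x ∈ s, b ≤ dist p x) : b ≤ Metric.infDist p s := by
  rw [Metric.infDist_eq_iInf]
  haveI : Nonempty s := hs.to_subtype
  exact le_ciInf fun y => hb y y.2

lemma aux_hyperplane {n : ℕ} (g : Fin n → ℝ) (p : EuclideanSpace ℝ (Fin n))
    (hS : 0 < ∑ i, g i ^ 2) :
    Metric.infDist p {x : EuclideanSpace ℝ (Fin n) | ∑ i, g i * x i = 0}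
      = |∑ i, g i * p i| / Real.sqrt (∑ i, g i ^ 2) := by
  set S : ℝ := ∑ i, g i ^ 2 with hSdef
  have hSne : S ≠ 0 := ne_of_gt hS
  have hsqS : Real.sqrt S ≠ 0 := by positivity
  set c : ℝ := (∑ i, g i * p i) / S with hc
  set q : EuclideanSpace ℝ (Fin n) := WithLp.toLp 2 (fun i => p i - c * g i) with hq
  have hqmem : q ∈ {x : EuclideanSpace ℝ (Fin n) | ∑ i, g i * x i = 0} := by
    have h1 : ∑ i, g i * q i = (∑ i, g i * p i) - c * S := by
      rw [hSdef, Finset.mul_sum, ← Finset.sum_sub_distrib]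
      exact Finset.sum_congr rfl fun i _ => by show g i * (p i - c * g i) = _; ring
    simp only [Set.mem_setOf_eq, h1, hc]
    field_simp
    ring
  have hdistq : dist p q = |∑ i, g i * p i| / Real.sqrt S := by
    rw [EuclideanSpace.dist_eq]
    have h2 : ∑ i, dist (p i) (q i) ^ 2 = c ^ 2 * S := by
      rw [hSdef, Finset.mul_sum]
      refine Finset.sum_congr rfl fun i _ => ?_
      rw [Real.dist_eq, sq_abs]
      show (p i - (p i - c * g i)) ^ 2 = _
      ring
    rw [h2, Real.sqrt_mul (sq_nonneg c), Real.sqrt_sq_eq_abs, hc, abs_div,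
      abs_of_pos hS, show S = Real.sqrt S * Real.sqrt S from (Real.mul_self_sqrt hS.le).symm]
    field_simp
    rw [Real.sqrt_sq (Real.sqrt_nonneg _), Real.sq_sqrt hS.le]
  refine le_antisymm ?_ ?_
  · rw [← hdistq]; exact Metric.infDist_le_dist_of_mem hqmem
  · refine aux_infDist_ge p _ ⟨q, hqmem⟩ _ fun x hx => ?_
    rw [Set.mem_setOf_eq] at hx
    rw [EuclideanSpace.dist_eq]
    have hgp : ∑ i, g i * (p i - x i) = ∑ i, g i * p i := by
      simp [mul_sub, Finset.sum_sub_distrib, hx]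
    have hcs := Finset.sum_mul_sq_le_sq_mul_sq Finset.univ g (fun i => p i - x i)
    have hd : ∑ i, dist (p i) (x i) ^ 2 = ∑ i, (p i - x i) ^ 2 :=
      Finset.sum_congr rfl fun i _ => by rw [Real.dist_eq, sq_abs]
    rw [hd, div_le_iff₀ (by positivity)]
    calc |∑ i, g i * p i| = |∑ i, g i * (p i - x i)| := by rw [hgp]
      _ ≤ Real.sqrt (S * ∑ i, (p i - x i) ^ 2) := by
          rw [← Real.sqrt_sq_eq_abs]; exact Real.sqrt_le_sqrt hcs
      _ = Real.sqrt (∑ i, (p i - x i) ^ 2) * Real.sqrt S := by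
          rw [Real.sqrt_mul hS.le, mul_comm]

lemma aux_line {n : ℕ} (g : Fin n → ℝ) (p : EuclideanSpace ℝ (Fin n))
    (hS : 0 < ∑ i, g i ^ 2) :
    Metric.infDist p {x : EuclideanSpace ℝ (Fin n) | ∃ τ : ℝ, ∀ i, x i = τ * g i}
      = Real.sqrt ((∑ i, (p i) ^ 2) - (∑ i, g i * p i) ^ 2 / ∑ i, g i ^ 2) := by
  set S : ℝ := ∑ i, g i ^ 2 with hSdef
  have hSne : S ≠ 0 := ne_of_gt hS
  set c : ℝ := (∑ i, g i * p i) / S with hc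
  set T : ℝ := (∑ i, (p i) ^ 2) - (∑ i, g i * p i) ^ 2 / S with hTdef
  have key : ∀ τ : ℝ, ∑ i, (p i - τ * g i) ^ 2 = T + S * (τ - c) ^ 2 := by
    intro τ
    have e1 : ∑ i, (p i - τ * g i) ^ 2
        = (∑ i, (p i) ^ 2) - 2 * τ * (∑ i, g i * p i) + τ ^ 2 * S := by
      rw [hSdef, Finset.mul_sum, Finset.mul_sum, ← Finset.sum_sub_distrib,
        ← Finset.sum_add_distrib]
      exact Finset.sum_congr rfl fun i _ => by ring
    rw [e1, hTdef, hc]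
    field_simp
    ring
  have hT : 0 ≤ T := by
    have h0 := key c
    have h1 : 0 ≤ ∑ i, (p i - c * g i) ^ 2 := Finset.sum_nonneg fun i _ => sq_nonneg _
    rw [h0] at h1; simpa using h1
  set q : EuclideanSpace ℝ (Fin n) := WithLp.toLp 2 (fun i => c * g i) with hq
  have hqmem : q ∈ {x : EuclideanSpace ℝ (Fin n) | ∃ τ : ℝ, ∀ i, x i = τ * g i} :=
    ⟨c, fun i => rfl⟩
  have hdistgen : ∀ (τ : ℝ) (x : EuclideanSpace ℝ (Fin n)), (∀ i, x i = τ * g i) →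
      dist p x = Real.sqrt (T + S * (τ - c) ^ 2) := by
    intro τ x hx
    rw [EuclideanSpace.dist_eq, ← key τ]
    congr 1
    exact Finset.sum_congr rfl fun i _ => by rw [Real.dist_eq, sq_abs, hx i]
  refine le_antisymm ?_ ?_
  · have := hdistgen c q fun i => rfl
    simp only [sub_self, ne_eq, OfNat.ofNat_ne_zero, not_false_eq_true, zero_pow,
      mul_zero, add_zero] at this
    rw [← this]
    exact Metric.infDist_le_dist_of_mem hqmem
  · refine aux_infDist_ge p _ ⟨q, hqmem⟩ _ fun x hx => ?_
    obtain ⟨τ, hτ⟩ := hx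
    rw [hdistgen τ x hτ]
    exact Real.sqrt_le_sqrt (by nlinarith [sq_nonneg (τ - c)])

lemma aux_product {n : ℕ} (a g : Fin n → ℝ) (t : ℝ)
    (hS : 0 < ∑ i, g i ^ 2)
    (ht : t = (1 - ∑ i, (g i) ^ 2 * (a i) ^ 2) / ∑ i, (g i) ^ 2)
    (p : EuclideanSpace ℝ (Fin n)) (hp : ∀ i, p i = g i * ((a i) ^ 2 + t)) :
    Metric.infDist p {x : EuclideanSpace ℝ (Fin n) | ∑ i, g i * x i = 0} *
      Metric.infDist p {x : EuclideanSpace ℝ (Fin n) | ∃ τ : ℝ, ∀ i, x i = τ * g i}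
      = Real.sqrt ((∑ i, (g i) ^ 2) * (∑ i, (g i) ^ 2 * (a i) ^ 4)
          - (∑ i, (g i) ^ 2 * (a i) ^ 2) ^ 2) / (∑ i, (g i) ^ 2) := by
  set S : ℝ := ∑ i, g i ^ 2 with hSdef
  set A : ℝ := ∑ i, (g i) ^ 2 * (a i) ^ 2 with hAdef
  set B : ℝ := ∑ i, (g i) ^ 2 * (a i) ^ 4 with hBdef
  have hSne : S ≠ 0 := ne_of_gt hS
  have h1 : ∑ i, g i * p i = 1 := by
    have e : ∑ i, g i * p i = A + t * S := by
      rw [hAdef, hSdef, Finset.mul_sum, ← Finset.sum_add_distrib]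
      exact Finset.sum_congr rfl fun i _ => by rw [hp i]; ring
    rw [e, ht]; field_simp; ring
  have h2 : ∑ i, (p i) ^ 2 = B + 2 * t * A + t ^ 2 * S := by
    rw [hBdef, hAdef, hSdef, Finset.mul_sum, Finset.mul_sum, ← Finset.sum_add_distrib,
      ← Finset.sum_add_distrib]
    exact Finset.sum_congr rfl fun i _ => by rw [hp i]; ring
  have hCS : 0 ≤ S * B - A ^ 2 := by
    have := Finset.sum_mul_sq_le_sq_mul_sq Finset.univ g (fun i => g i * (a i) ^ 2)
    have e1 : ∑ i, g i * (g i * (a i) ^ 2) = A :=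
      Finset.sum_congr rfl fun i _ => by ring
    have e2 : ∑ i, (g i * (a i) ^ 2) ^ 2 = B :=
      Finset.sum_congr rfl fun i _ => by ring
    rw [e1, e2] at this
    linarith
  have inner_eq : B + 2 * t * A + t ^ 2 * S - 1 ^ 2 / S = (S * B - A ^ 2) / S := by
    rw [ht]; field_simp; ring
  rw [aux_hyperplane g p hS, aux_line g p hS, h1, h2, ← hSdef, inner_eq, abs_one,
    Real.sqrt_div hCS S, div_mul_div_comm, one_mul, Real.mul_self_sqrt hS.le]

/-- The point of contact `P(h)` of the hyperplane `⟨h, x⟩ = 1` with the unique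
confocal quadric tangent to it satisfies: it lies on the hyperplane and on the
quadric `C(−t(h))` with normal proportional to `h`; the product of its distance
`d₁` to the parallel hyperplane through the origin and its distance `d₂` to the
line `ℝh` equals `√((∑h_i²)(∑h_i²a_i⁴) − (∑h_i²a_i²)²)/(∑h_i²)`, and this
product is invariant under `h ↦ τh` (`τ ≠ 0`): the contact points of parallel
tangent hyperplanes lie on an equilateral hyperbola. -/
theorem contact_points_of_parallel_tangent_hyperplanes
    (n : ℕ) (hn : 1 ≤ n) (a : Fin n → ℝ) (ha : ∀ i, 0 < a i)
    (hmono : ∀ i j : Fin n, i < j → a j < a i)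
    (t : (Fin n → ℝ) → ℝ)
    (ht : ∀ g : Fin n → ℝ,
      t g = (1 - ∑ i, (g i) ^ 2 * (a i) ^ 2) / ∑ i, (g i) ^ 2)
    (P : (Fin n → ℝ) → EuclideanSpace ℝ (Fin n))
    (hP : ∀ g i, P g i = g i * ((a i) ^ 2 + t g))
    (d₁ d₂ : (Fin n → ℝ) → ℝ)
    (hd₁ : ∀ g, d₁ g = Metric.infDist (P g)
      {x : EuclideanSpace ℝ (Fin n) | ∑ i, g i * x i = 0})
    (hd₂ : ∀ g, d₂ g = Metric.infDist (P g)
      {x : EuclideanSpace ℝ (Fin n) | ∃ τ : ℝ, ∀ i, x i = τ * g i})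
    (h : Fin n → ℝ) (hh : h ≠ 0) (hreg : ∀ i, (a i) ^ 2 + t h ≠ 0) :
    (∑ i, h i * P h i = 1) ∧
    (∑ i, (P h i) ^ 2 / ((a i) ^ 2 + t h) = 1) ∧
    (∃ c : ℝ, ∀ i, P h i / ((a i) ^ 2 + t h) = c * h i) ∧
    d₁ h * d₂ h =
      Real.sqrt ((∑ i, (h i) ^ 2) * (∑ i, (h i) ^ 2 * (a i) ^ 4)
          - (∑ i, (h i) ^ 2 * (a i) ^ 2) ^ 2) / (∑ i, (h i) ^ 2) ∧
    (∀ τ : ℝ, τ ≠ 0 → d₁ (τ • h) * d₂ (τ • h) = d₁ h * d₂ h) := by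
  obtain ⟨i₀, hi₀'⟩ := Function.ne_iff.mp hh
  have hi₀ : h i₀ ≠ 0 := by simpa using hi₀'
  have hS : 0 < ∑ i, h i ^ 2 :=
    Finset.sum_pos' (fun i _ => sq_nonneg _)
      ⟨i₀, Finset.mem_univ i₀, by simpa using pow_pos (abs_pos.mpr hi₀) 2⟩
  have hSne : (∑ i, h i ^ 2) ≠ 0 := ne_of_gt hS
  have h1 : ∑ i, h i * P h i = 1 := by
    have e : ∑ i, h i * P h i
        = (∑ i, (h i) ^ 2 * (a i) ^ 2) + t h * ∑ i, h i ^ 2 := by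
      rw [Finset.mul_sum, ← Finset.sum_add_distrib]
      exact Finset.sum_congr rfl fun i _ => by rw [hP h i]; ring
    rw [e, ht h]; field_simp; ring
  refine ⟨h1, ?_, ⟨1, fun i => ?_⟩, ?_, ?_⟩
  · rw [← h1]
    refine Finset.sum_congr rfl fun i _ => ?_
    rw [hP h i, div_eq_iff (hreg i)]
    ring
  · rw [hP h i, mul_div_assoc, div_self (hreg i), one_mul, mul_one]
  · rw [hd₁ h, hd₂ h]
    exact aux_product a h (t h) hS (ht h) (P h) (hP h)
  · intro τ hτ
    have hS' : 0 < ∑ i, (τ • h) i ^ 2 := by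
      have e : ∑ i, (τ • h) i ^ 2 = τ ^ 2 * ∑ i, h i ^ 2 := by
        rw [Finset.mul_sum]
        exact Finset.sum_congr rfl fun i _ => by
          simp [Pi.smul_apply, smul_eq_mul]; ring
      rw [e]
      exact mul_pos (by positivity) hS
    rw [hd₁, hd₂, hd₁ h, hd₂ h,
      aux_product a (τ • h) (t (τ • h)) hS' (ht (τ • h)) (P (τ • h)) (hP (τ • h)),
      aux_product a h (t h) hS (ht h) (P h) (hP h)]
    have e1 : ∑ i, (τ • h) i ^ 2 = τ ^ 2 * ∑ i, h i ^ 2 := by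
      rw [Finset.mul_sum]
      exact Finset.sum_congr rfl fun i _ => by simp [Pi.smul_apply, smul_eq_mul]; ring
    have e2 : ∑ i, (τ • h) i ^ 2 * (a i) ^ 2 = τ ^ 2 * ∑ i, h i ^ 2 * (a i) ^ 2 := by
      rw [Finset.mul_sum]
      exact Finset.sum_congr rfl fun i _ => by simp [Pi.smul_apply, smul_eq_mul]; ring
    have e3 : ∑ i, (τ • h) i ^ 2 * (a i) ^ 4 = τ ^ 2 * ∑ i, h i ^ 2 * (a i) ^ 4 := by
      rw [Finset.mul_sum]
      exact Finset.sum_congr rfl fun i _ => by simp [Pi.smul_apply, smul_eq_mul]; ring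
    rw [e1, e2, e3]
    have e4 : τ ^ 2 * (∑ i, h i ^ 2) * (τ ^ 2 * ∑ i, h i ^ 2 * (a i) ^ 4)
        - (τ ^ 2 * ∑ i, h i ^ 2 * (a i) ^ 2) ^ 2
        = (τ ^ 2) ^ 2 * ((∑ i, h i ^ 2) * (∑ i, h i ^ 2 * (a i) ^ 4)
          - (∑ i, h i ^ 2 * (a i) ^ 2) ^ 2) := by ring
    rw [e4, Real.sqrt_mul (sq_nonneg _), Real.sqrt_sq (sq_nonneg τ),
      mul_div_mul_left _ _ (pow_ne_zero 2 hτ)]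
end

section
/- Let 0 < a_n < ⋯ < a_1 and let x ∈ ℝⁿ have x_i ≠ 0 for every i. Then there exist n distinct real numbers λ_1, …, λ_n with a_{j+1}² < λ_j < a_j² for j = 1, …, n−1 and λ_n < a_n², such that Σ_{i=1}^n x_i²/(a_i² − λ_j) = 1 for every j ∈ {1, …, n}; that is, the point x lies on exactly one confocal quadric of each of the n types, and in particular on exactly one ellipsoid of the confocal family. -/
open Filter Topology Set

private lemma confocal_aux
    (n : ℕ) (a : Fin n → ℝ) (ha : ∀ i, 0 < a i)
    (hmono : ∀ i j : Fin n, i < j → a j < a i)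
    (x : Fin n → ℝ) (hx : ∀ i, x i ≠ 0) (j : Fin n) :
    ∃ t : ℝ, t < (a j) ^ 2 ∧
      (∀ hj : (j : ℕ) + 1 < n, (a ⟨(j : ℕ) + 1, hj⟩) ^ 2 < t) ∧
      (∑ i, (x i) ^ 2 / ((a i) ^ 2 - t)) = 1 := by
  classical
  set c : Fin n → ℝ := fun i => (a i) ^ 2 with hc
  have hcmono : ∀ i k : Fin n, i < k → c k < c i := fun i k hik => by
    have h1 := hmono i k hik
    have h2 := ha k
    simp only [hc]
    nlinarith
  have hcanti : ∀ i k : Fin n, i ≤ k → c k ≤ c i := fun i k hik => by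
    rcases lt_or_eq_of_le hik with h | h
    · exact (hcmono i k h).le
    · rw [h]
  set f : ℝ → ℝ := fun t => ∑ i, x i ^ 2 / (c i - t) with hf
  have hxpos : ∀ i : Fin n, (0:ℝ) < x i ^ 2 := fun i => pow_two_pos_of_ne_zero (hx i)
  -- continuity away from poles
  have hcont : ∀ t : ℝ, (∀ i, c i ≠ t) → ContinuousAt f t := by
    intro t ht
    exact tendsto_finset_sum _ (fun i _ =>
      (continuousAt_const.div (continuousAt_const.sub continuousAt_id)
        (sub_ne_zero.2 (ht i))))
  -- the sum of terms other than i₀ converges near c i₀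
  have hrest : ∀ i₀ : Fin n,
      Tendsto (fun t => ∑ i ∈ Finset.univ.erase i₀, x i ^ 2 / (c i - t)) (𝓝 (c i₀))
        (𝓝 (∑ i ∈ Finset.univ.erase i₀, x i ^ 2 / (c i - c i₀))) := by
    intro i₀
    apply tendsto_finset_sum
    intro i hi
    have hne : c i ≠ c i₀ := by
      have : i ≠ i₀ := Finset.ne_of_mem_erase hi
      rcases lt_or_gt_of_ne this with h | h
      · exact (hcmono i i₀ h).ne'
      · exact (hcmono i₀ i h).ne
    exact (continuousAt_const.div (continuousAt_const.sub continuousAt_id)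
      (sub_ne_zero.2 hne))
  have hsplit : ∀ i₀ : Fin n, ∀ t : ℝ,
      f t = x i₀ ^ 2 / (c i₀ - t) + ∑ i ∈ Finset.univ.erase i₀, x i ^ 2 / (c i - t) := by
    intro i₀ t
    rw [hf]
    exact (Finset.add_sum_erase _ _ (Finset.mem_univ i₀)).symm
  -- f tends to +∞ from the left of each pole
  have htop : ∀ i₀ : Fin n, Tendsto f (𝓝[<] c i₀) atTop := by
    intro i₀
    have h1 : Tendsto (fun t => c i₀ - t) (𝓝[<] c i₀) (𝓝[>] (0:ℝ)) := by
      apply tendsto_nhdsWithin_of_tendsto_nhds_of_eventually_within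
      · have hcc : Continuous (fun t : ℝ => c i₀ - t) := continuous_const.sub continuous_id
        have := hcc.tendsto' (c i₀) 0 (by simp)
        exact this.mono_left nhdsWithin_le_nhds
      · filter_upwards [self_mem_nhdsWithin] with t ht
        simpa [sub_pos] using ht
    have h2 : Tendsto (fun t => (c i₀ - t)⁻¹) (𝓝[<] c i₀) atTop :=
      tendsto_inv_nhdsGT_zero.comp h1
    have h3 : Tendsto (fun t => x i₀ ^ 2 / (c i₀ - t)) (𝓝[<] c i₀) atTop := by
      simpa [div_eq_mul_inv] using h2.const_mul_atTop (hxpos i₀)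
    have h4 := (hrest i₀).mono_left (nhdsWithin_le_nhds : 𝓝[<] c i₀ ≤ 𝓝 (c i₀))
    have := h3.atTop_add h4
    apply this.congr
    intro t
    exact (hsplit i₀ t).symm
  -- f tends to -∞ from the right of each pole
  have hbot : ∀ i₀ : Fin n, Tendsto f (𝓝[>] c i₀) atBot := by
    intro i₀
    have h1 : Tendsto (fun t => t - c i₀) (𝓝[>] c i₀) (𝓝[>] (0:ℝ)) := by
      apply tendsto_nhdsWithin_of_tendsto_nhds_of_eventually_within
      · have hcc : Continuous (fun t : ℝ => t - c i₀) := continuous_id.sub continuous_const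
        have := hcc.tendsto' (c i₀) 0 (by simp)
        exact this.mono_left nhdsWithin_le_nhds
      · filter_upwards [self_mem_nhdsWithin] with t ht
        simpa [sub_pos] using ht
    have h2 : Tendsto (fun t => (t - c i₀)⁻¹) (𝓝[>] c i₀) atTop :=
      tendsto_inv_nhdsGT_zero.comp h1
    have h3 : Tendsto (fun t => x i₀ ^ 2 / (c i₀ - t)) (𝓝[>] c i₀) atBot := by
      have h5 : Tendsto (fun t => x i₀ ^ 2 * (t - c i₀)⁻¹) (𝓝[>] c i₀) atTop :=
        h2.const_mul_atTop (hxpos i₀)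
      have h6 := tendsto_neg_atTop_atBot.comp h5
      apply h6.congr
      intro t
      show -(x i₀ ^ 2 * (t - c i₀)⁻¹) = x i₀ ^ 2 / (c i₀ - t)
      rw [div_eq_mul_inv, ← neg_sub t (c i₀), ← neg_inv, mul_neg]
    have h4 := (hrest i₀).mono_left (nhdsWithin_le_nhds : 𝓝[>] c i₀ ≤ 𝓝 (c i₀))
    have := h3.atBot_add h4
    apply this.congr
    intro t
    exact (hsplit i₀ t).symm
  -- f tends to 0 at -∞
  have hzero : Tendsto f atBot (𝓝 0) := by
    have : Tendsto f atBot (𝓝 (∑ _i : Fin n, (0:ℝ))) := by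
      apply tendsto_finset_sum
      intro i _
      apply Filter.Tendsto.div_atTop (tendsto_const_nhds)
      have : Tendsto (fun t : ℝ => -t) atBot atTop := tendsto_neg_atBot_atTop
      have := tendsto_atTop_add_const_left atBot (c i) this
      apply this.congr
      intro t; ring
    simpa using this
  -- find a point v just below c j with f v > 1, above a lower bound b < c j
  have hmain : ∀ b : ℝ, b < c j → (∀ t ∈ Ioo b (c j), ∀ i, c i ≠ t) →
      Tendsto f (𝓝[>] b) atBot ∨ b = b →
      True := fun _ _ _ _ => trivial
  -- common step: given u < v in an interval with f u < 1 < f v and continuity, get a root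
  have hroot : ∀ u v : ℝ, u < v → f u < 1 → 1 < f v →
      (∀ t ∈ Icc u v, ∀ i, c i ≠ t) → ∃ t ∈ Ioo u v, f t = 1 := by
    intro u v huv hu hv hpole
    have hcontOn : ContinuousOn f (Icc u v) := fun t ht =>
      (hcont t (hpole t ht)).continuousWithinAt
    have := intermediate_value_Ioo huv.le hcontOn
    have h1 : (1:ℝ) ∈ Ioo (f u) (f v) := ⟨hu, hv⟩
    obtain ⟨t, ht, hft⟩ := this h1
    exact ⟨t, ht, hft⟩
  by_cases hj : (j : ℕ) + 1 < n
  · -- interval (c ⟨j+1⟩, c j)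
    set j' : Fin n := ⟨(j : ℕ) + 1, hj⟩ with hj'
    have hjj' : j < j' := by
      simp [Fin.lt_def, hj']
    have hbd : c j' < c j := hcmono j j' hjj'
    have hpole : ∀ t ∈ Ioo (c j') (c j), ∀ i, c i ≠ t := by
      intro t ht i
      rcases le_or_gt i j with h | h
      · exact ne_of_gt (lt_of_lt_of_le ht.2 (hcanti i j h))
      · have : j' ≤ i := by
          simp only [Fin.le_def, hj']
          exact Nat.succ_le_of_lt h
        exact ne_of_lt (lt_of_le_of_lt (hcanti j' i this) ht.1)
    -- v near c j with f v > 1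
    have hv : ∃ v ∈ Ioo (c j') (c j), 1 < f v := by
      have h1 := (htop j).eventually (eventually_gt_atTop (1:ℝ))
      have h2 : Ioo (c j') (c j) ∈ 𝓝[<] c j :=
        Ioo_mem_nhdsLT_of_mem ⟨hbd, le_refl _⟩
      obtain ⟨v, hv1, hv2⟩ := (h1.and (eventually_of_mem h2 (fun t ht => ht))).exists
      exact ⟨v, hv2, hv1⟩
    obtain ⟨v, hvmem, hv1⟩ := hv
    have hu : ∃ u ∈ Ioo (c j') v, f u < 1 := by
      have h1 := (hbot j').eventually (eventually_lt_atBot (1:ℝ))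
      have h2 : Ioo (c j') v ∈ 𝓝[>] c j' :=
        Ioo_mem_nhdsGT_of_mem ⟨le_refl _, hvmem.1⟩
      obtain ⟨u, hu1, hu2⟩ := (h1.and (eventually_of_mem h2 (fun t ht => ht))).exists
      exact ⟨u, hu2, hu1⟩
    obtain ⟨u, humem, hu1⟩ := hu
    obtain ⟨t, htmem, hft⟩ := hroot u v humem.2 hu1 hv1
      (fun t ht i => hpole t ⟨lt_of_lt_of_le humem.1 ht.1,
        lt_of_le_of_lt ht.2 hvmem.2⟩ i)
    refine ⟨t, lt_trans htmem.2 hvmem.2, ?_, ?_⟩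
    · intro hj2
      exact lt_trans humem.1 htmem.1
    · simpa [hf, hc] using hft
  · -- j is the last index; interval (-∞, c j)
    have hlast : ∀ i : Fin n, i ≤ j := by
      intro i
      have : (i : ℕ) < n := i.isLt
      have hjn : (j : ℕ) + 1 = n := by omega
      exact Fin.le_def.2 (by omega)
    have hpole : ∀ t, t < c j → ∀ i, c i ≠ t := by
      intro t ht i
      exact ne_of_gt (lt_of_lt_of_le ht (hcanti i j (hlast i)))
    have hv : ∃ v, v < c j ∧ 1 < f v := by
      have h1 := (htop j).eventually (eventually_gt_atTop (1:ℝ))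
      obtain ⟨v, hv1, hv2⟩ := (h1.and (eventually_of_mem self_mem_nhdsWithin
        (fun t (ht : t ∈ Iio (c j)) => ht))).exists
      exact ⟨v, hv2, hv1⟩
    obtain ⟨v, hvlt, hv1⟩ := hv
    have hu : ∃ u, u < v ∧ f u < 1 := by
      have h1 := hzero.eventually_lt_const (by norm_num : (0:ℝ) < 1)
      obtain ⟨u, hu1, hu2⟩ := (h1.and (eventually_lt_atBot v)).exists
      exact ⟨u, hu2, hu1⟩
    obtain ⟨u, huv, hu1⟩ := hu
    obtain ⟨t, htmem, hft⟩ := hroot u v huv hu1 hv1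
      (fun t ht i => hpole t (lt_of_le_of_lt ht.2 hvlt) i)
    refine ⟨t, lt_trans htmem.2 hvlt, fun hj2 => absurd hj2 hj, ?_⟩
    simpa [hf, hc] using hft

/-- Through every point with all coordinates nonzero there pass exactly `n`
confocal quadrics of the family `∑ x_i²/(a_i² − λ) = 1`, one of each type:
there are `n` distinct parameters `λ_j` with `a_{j+1}² < λ_j < a_j²` for
`j = 1, …, n−1` and `λ_n < a_n²`, each of whose quadrics contains the point. -/
theorem confocal_quadrics_through_a_point
    (n : ℕ) (a : Fin n → ℝ) (ha : ∀ i, 0 < a i)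
    (hmono : ∀ i j : Fin n, i < j → a j < a i)
    (x : Fin n → ℝ) (hx : ∀ i, x i ≠ 0) :
    ∃ lam : Fin n → ℝ,
      Function.Injective lam ∧
      (∀ j : Fin n, lam j < (a j) ^ 2) ∧
      (∀ j : Fin n, ∀ hj : (j : ℕ) + 1 < n, (a ⟨(j : ℕ) + 1, hj⟩) ^ 2 < lam j) ∧
      (∀ j : Fin n, ∑ i, (x i) ^ 2 / ((a i) ^ 2 - lam j) = 1) := by
  classical
  have key := fun j => confocal_aux n a ha hmono x hx j
  choose lam h1 h2 h3 using key
  have hcanti : ∀ i k : Fin n, i ≤ k → (a k) ^ 2 ≤ (a i) ^ 2 := fun i k hik => by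
    rcases lt_or_eq_of_le hik with h | h
    · have := hmono i k h; have := ha k; nlinarith
    · rw [h]
  have hanti : ∀ j1 j2 : Fin n, j1 < j2 → lam j2 < lam j1 := by
    intro j1 j2 hlt
    have hj1 : (j1 : ℕ) + 1 < n := by
      have := j2.isLt
      have := Fin.lt_def.1 hlt
      omega
    have hle : (⟨(j1 : ℕ) + 1, hj1⟩ : Fin n) ≤ j2 :=
      Fin.le_def.2 (Nat.succ_le_of_lt (Fin.lt_def.1 hlt))
    calc lam j2 < (a j2) ^ 2 := h1 j2
      _ ≤ (a ⟨(j1 : ℕ) + 1, hj1⟩) ^ 2 := hcanti _ _ hle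
      _ < lam j1 := h2 j1 hj1
  refine ⟨lam, ?_, h1, h2, h3⟩
  intro j1 j2 heq
  by_contra hne
  rcases lt_or_gt_of_ne hne with h | h
  · linarith [hanti j1 j2 h, heq.le, heq.ge]
  · linarith [hanti j2 j1 h, heq.le, heq.ge]
end

section
/- Let 0 < a_n < ⋯ < a_1, let λ_1, …, λ_n be distinct real numbers with a_i² ≠ λ_j for all i, j, and let x ∈ ℝⁿ satisfy Σ_{i=1}^n x_i²/(a_i² − λ_j) = 1 for every j ∈ {1, …, n} (so x lies on all n confocal quadrics C(λ_j)). Then the coordinates of x are determined by the confocal parameters: for every i, x_i² · Π_{k ≠ i} (a_i² − a_k²) = Π_{j=1}^n (a_i² − λ_j). -/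
open Polynomial Finset

lemma prod_sub_comm {α : Type*} (s : Finset α) (f : α → ℝ) (c : ℝ) :
    ∏ k ∈ s, (c - f k) = (-1)^s.card * ∏ k ∈ s, (f k - c) := by
  rw [← prod_const, ← prod_mul_distrib]
  congr 1; ext k; ring


/-- If the point `x` lies on all `n` confocal quadrics `C(λ_j)`, then its
coordinates are determined by the confocal parameters:
`x_i² · Π_{k ≠ i} (a_i² − a_k²) = Π_j (a_i² − λ_j)`. -/
theorem coordinates_from_confocal_parameters
    (n : ℕ) (a : Fin n → ℝ) (ha : ∀ i, 0 < a i)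
    (hmono : ∀ i j : Fin n, i < j → a j < a i)
    (lam : Fin n → ℝ) (hinj : Function.Injective lam)
    (hreg : ∀ i j, (a i) ^ 2 ≠ lam j)
    (x : Fin n → ℝ)
    (hx : ∀ j, ∑ i, (x i) ^ 2 / ((a i) ^ 2 - lam j) = 1) :
    ∀ i, (x i) ^ 2 * ∏ k ∈ Finset.univ.erase i, ((a i) ^ 2 - (a k) ^ 2)
        = ∏ j, ((a i) ^ 2 - lam j) := by
  intro i
  have hn : 0 < n := i.pos
  set P : ℝ[X] := ∏ k : Fin n, (X - C ((a k)^2)) with hP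
  set L : ℝ[X] := ∏ j : Fin n, (X - C (lam j)) with hL
  set S : ℝ[X] := ∑ m : Fin n, C ((x m)^2) * ∏ k ∈ Finset.univ.erase m, (X - C ((a k)^2)) with hS
  -- degrees
  have hPm : P.Monic := monic_prod_of_monic _ _ (fun k _ => monic_X_sub_C _)
  have hLm : L.Monic := monic_prod_of_monic _ _ (fun k _ => monic_X_sub_C _)
  have hPd : P.natDegree = n := by
    rw [hP, natDegree_prod _ _ (fun k _ => X_sub_C_ne_zero _)]
    simp only [natDegree_X_sub_C, Finset.sum_const, smul_eq_mul, mul_one, Finset.card_univ,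
      Fintype.card_fin]
  have hLd : L.natDegree = n := by
    rw [hL, natDegree_prod _ _ (fun k _ => X_sub_C_ne_zero _)]
    simp only [natDegree_X_sub_C, Finset.sum_const, smul_eq_mul, mul_one, Finset.card_univ,
      Fintype.card_fin]
  have hPL : (P - L).degree < (n : ℕ) := by
    have := degree_sub_lt
      (by rw [degree_eq_natDegree hPm.ne_zero, degree_eq_natDegree hLm.ne_zero, hPd, hLd])
      hPm.ne_zero (hPm.leadingCoeff.trans hLm.leadingCoeff.symm)
    rwa [degree_eq_natDegree hPm.ne_zero, hPd] at this
  have hSd : S.degree < (n : ℕ) := by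
    refine lt_of_le_of_lt (degree_sum_le _ _) ?_
    rw [Finset.sup_lt_iff (by exact_mod_cast WithBot.bot_lt_coe n)]
    intro m _
    refine lt_of_le_of_lt (degree_mul_le _ _) ?_
    have h1 : (C ((x m)^2)).degree ≤ 0 := degree_C_le
    have h2 : (∏ k ∈ Finset.univ.erase m, (X - C ((a k)^2))).degree = ((n - 1 : ℕ) : WithBot ℕ) := by
      have hm2 : (∏ k ∈ Finset.univ.erase m, (X - C ((a k)^2))).Monic :=
        monic_prod_of_monic _ _ (fun k _ => monic_X_sub_C _)
      rw [degree_eq_natDegree hm2.ne_zero,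
        natDegree_prod _ _ (fun k _ => X_sub_C_ne_zero _)]
      simp only [natDegree_X_sub_C, Finset.sum_const, smul_eq_mul, mul_one,
        Finset.card_erase_of_mem (mem_univ m), Finset.card_univ, Fintype.card_fin]
    calc (C ((x m)^2)).degree + (∏ k ∈ Finset.univ.erase m, (X - C ((a k)^2))).degree
        ≤ 0 + ((n - 1 : ℕ) : WithBot ℕ) := add_le_add h1 h2.le
      _ = ((n - 1 : ℕ) : WithBot ℕ) := by rw [zero_add]
      _ < (n : ℕ) := by exact_mod_cast Nat.sub_lt hn one_pos
  -- the polynomial D := S + P - L vanishes at all lam j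
  have hroot : ∀ j, (S + P - L).eval (lam j) = 0 := by
    intro j
    have hne : ∀ k : Fin n, (a k)^2 - lam j ≠ 0 := fun k => sub_ne_zero.mpr (hreg k j)
    have hprodne : (∏ k : Fin n, ((a k)^2 - lam j)) ≠ 0 := prod_ne_zero_iff.mpr fun k _ => hne k
    have key : ∑ m : Fin n, (x m)^2 * ∏ k ∈ Finset.univ.erase m, ((a k)^2 - lam j)
        = ∏ k : Fin n, ((a k)^2 - lam j) := by
      have := hx j
      calc ∑ m : Fin n, (x m)^2 * ∏ k ∈ Finset.univ.erase m, ((a k)^2 - lam j)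
          = ∑ m : Fin n, ((x m)^2 / ((a m)^2 - lam j)) * ∏ k : Fin n, ((a k)^2 - lam j) := by
            refine Finset.sum_congr rfl fun m _ => ?_
            rw [← Finset.mul_prod_erase _ _ (mem_univ m), div_mul_eq_mul_div, mul_div_assoc,
              mul_div_cancel_left₀ _ (hne m)]
        _ = (∑ m : Fin n, (x m)^2 / ((a m)^2 - lam j)) * ∏ k : Fin n, ((a k)^2 - lam j) := by
            rw [Finset.sum_mul]
        _ = ∏ k : Fin n, ((a k)^2 - lam j) := by rw [this, one_mul]
    simp only [eval_sub, eval_add, hS, hP, hL, eval_finset_sum, eval_prod, eval_mul, eval_sub,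
      eval_X, eval_C]
    have e1 : ∀ m : Fin n, ∏ k ∈ Finset.univ.erase m, (lam j - (a k)^2)
        = (-1)^(n-1) * ∏ k ∈ Finset.univ.erase m, ((a k)^2 - lam j) := by
      intro m
      rw [prod_sub_comm, Finset.card_erase_of_mem (mem_univ _), card_univ, Fintype.card_fin]
    have e2 : ∏ k : Fin n, (lam j - (a k)^2) = (-1)^n * ∏ k : Fin n, ((a k)^2 - lam j) := by
      rw [prod_sub_comm (univ : Finset (Fin n)), card_univ, Fintype.card_fin]
    have e3 : ∏ k : Fin n, (lam j - lam k) = 0 :=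
      Finset.prod_eq_zero (mem_univ j) (by simp)
    rw [e3]
    calc (∑ m : Fin n, (x m)^2 * ∏ k ∈ Finset.univ.erase m, (lam j - (a k)^2))
          + ∏ k : Fin n, (lam j - (a k)^2) - 0
        = (-1)^(n-1) * (∑ m : Fin n, (x m)^2 * ∏ k ∈ Finset.univ.erase m, ((a k)^2 - lam j))
          + (-1)^n * ∏ k : Fin n, ((a k)^2 - lam j) := by
          rw [sub_zero, e2, Finset.mul_sum]
          congr 1
          exact Finset.sum_congr rfl fun m _ => by rw [e1 m]; ring
      _ = 0 := by
          rw [key]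
          have : (-1 : ℝ)^n = -(-1)^(n-1) := by
            conv_lhs => rw [← Nat.sub_add_cancel hn]
            rw [pow_succ]
            ring
          rw [this]; ring
  -- hence D = 0
  have hD : S + P - L = 0 := by
    apply eq_zero_of_natDegree_lt_card_of_eval_eq_zero _ hinj hroot
    rw [Fintype.card_fin]
    have hdeg : (S + P - L).degree < (n : ℕ) := by
      calc (S + P - L).degree = (S + (P - L)).degree := by ring_nf
        _ ≤ max S.degree (P - L).degree := degree_add_le _ _
        _ < (n : ℕ) := max_lt hSd hPL
    rcases eq_or_ne (S + P - L) 0 with h | h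
    · simpa [h] using hn
    · exact (natDegree_lt_iff_degree_lt h).mpr hdeg
  -- evaluate at (a i)^2
  have := congrArg (eval ((a i)^2)) hD
  simp only [eval_sub, eval_add, hS, hP, hL, eval_finset_sum, eval_prod, eval_mul, eval_sub,
    eval_X, eval_C, eval_zero] at this
  have eP : ∏ k : Fin n, ((a i)^2 - (a k)^2) = 0 :=
    Finset.prod_eq_zero (mem_univ i) (by simp)
  have eS : ∑ m : Fin n, (x m)^2 * ∏ k ∈ Finset.univ.erase m, ((a i)^2 - (a k)^2)
      = (x i)^2 * ∏ k ∈ Finset.univ.erase i, ((a i)^2 - (a k)^2) := by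
    refine Finset.sum_eq_single i (fun m _ hm => ?_) (by simp)
    have : (∏ k ∈ Finset.univ.erase m, ((a i)^2 - (a k)^2)) = 0 :=
      Finset.prod_eq_zero (Finset.mem_erase.mpr ⟨Ne.symm hm, mem_univ i⟩) (by simp)
    rw [this, mul_zero]
  rw [eP, eS] at this
  linarith [this]
end

section
/- Let 0 < a_n < ⋯ < a_1, let λ_1, …, λ_n be distinct real numbers with a_i² ≠ λ_j for all i, j, and let x ∈ ℝⁿ satisfy Σ_{i=1}^n x_i²/(a_i² − λ_j) = 1 for every j ∈ {1, …, n}. Then the squared Euclidean norm of x is ‖x‖² = Σ_{i=1}^n a_i² − Σ_{j=1}^n λ_j. -/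
open Polynomial Finset

/-- If the point `x` lies on all `n` confocal quadrics `C(λ_j)`, then its
squared Euclidean norm is `‖x‖² = ∑ a_i² − ∑ λ_j`. -/
theorem norm_sq_from_confocal_parameters
    (n : ℕ) (a : Fin n → ℝ) (ha : ∀ i, 0 < a i)
    (hmono : ∀ i j : Fin n, i < j → a j < a i)
    (lam : Fin n → ℝ) (hinj : Function.Injective lam)
    (hreg : ∀ i j, (a i) ^ 2 ≠ lam j)
    (x : EuclideanSpace ℝ (Fin n))
    (hx : ∀ j, ∑ i, (x i) ^ 2 / ((a i) ^ 2 - lam j) = 1) :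
    ‖x‖ ^ 2 = ∑ i, (a i) ^ 2 - ∑ j, lam j := by
  classical
  have hnorm : ‖x‖ ^ 2 = ∑ i, (x i) ^ 2 := by
    rw [EuclideanSpace.norm_eq, Real.sq_sqrt (by positivity)]
    simp [sq_abs]
  rcases Nat.eq_zero_or_pos n with h0 | hn
  · subst h0; simp [hnorm]
  set A : Polynomial ℝ := ∏ i, (X - C ((a i) ^ 2)) with hA
  set S : Polynomial ℝ := ∑ i, C ((x i) ^ 2) * ∏ k ∈ {i}ᶜ, (X - C ((a k) ^ 2)) with hS
  set B : Polynomial ℝ := ∏ j, (X - C (lam j)) with hB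
  have hAmonic : A.Monic := monic_prod_of_monic _ _ fun i _ => monic_X_sub_C _
  have hBmonic : B.Monic := monic_prod_of_monic _ _ fun i _ => monic_X_sub_C _
  have hAdeg : A.natDegree = n := by
    rw [hA, natDegree_prod _ _ (fun i _ => X_sub_C_ne_zero _)]
    simp only [natDegree_X_sub_C, Finset.sum_const, Finset.card_univ, Fintype.card_fin,
      smul_eq_mul, mul_one]
  have hBdeg : B.natDegree = n := by
    rw [hB, natDegree_prod _ _ (fun i _ => X_sub_C_ne_zero _)]
    simp only [natDegree_X_sub_C, Finset.sum_const, Finset.card_univ, Fintype.card_fin,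
      smul_eq_mul, mul_one]
  have hMi : ∀ i : Fin n, (∏ k ∈ ({i}ᶜ : Finset (Fin n)), (X - C ((a k) ^ 2))).Monic :=
    fun i => monic_prod_of_monic _ _ fun k _ => monic_X_sub_C _
  have hMideg : ∀ i : Fin n,
      (∏ k ∈ ({i}ᶜ : Finset (Fin n)), (X - C ((a k) ^ 2))).natDegree = n - 1 := by
    intro i
    rw [natDegree_prod _ _ (fun k _ => X_sub_C_ne_zero _)]
    simp only [natDegree_X_sub_C, Finset.sum_const, smul_eq_mul, mul_one]
    simp [Finset.card_compl]
  have hSdeg : S.degree < n := by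
    apply lt_of_le_of_lt (degree_sum_le _ _)
    rw [Finset.sup_lt_iff (by exact_mod_cast WithBot.bot_lt_coe n)]
    intro i _
    calc (C ((x i) ^ 2) * ∏ k ∈ {i}ᶜ, (X - C ((a k) ^ 2))).degree
        ≤ 0 + (∏ k ∈ ({i}ᶜ : Finset (Fin n)), (X - C ((a k) ^ 2))).degree :=
          le_trans (degree_mul_le _ _) (add_le_add_left degree_C_le _)
      _ = ((n - 1 : ℕ) : WithBot ℕ) := by
          rw [zero_add, degree_eq_natDegree (hMi i).ne_zero, hMideg i]
      _ < (n : WithBot ℕ) := by exact_mod_cast Nat.sub_lt hn one_pos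
  -- key: λ_j is a root of A + S
  have hroot : ∀ j, (A + S).eval (lam j) = 0 := by
    intro j
    have hne : ∀ i : Fin n, (a i) ^ 2 - lam j ≠ 0 :=
      fun i => sub_ne_zero.mpr (hreg i j)
    have h2 : ∑ i, (x i) ^ 2 * ∏ k ∈ ({i}ᶜ : Finset (Fin n)), ((a k) ^ 2 - lam j)
        = ∏ i, ((a i) ^ 2 - lam j) := by
      have hsplit : ∀ i : Fin n, ∏ k, ((a k) ^ 2 - lam j)
          = ((a i) ^ 2 - lam j) * ∏ k ∈ ({i}ᶜ : Finset (Fin n)), ((a k) ^ 2 - lam j) := by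
        intro i
        rw [Finset.compl_singleton]
        exact (Finset.mul_prod_erase univ _ (Finset.mem_univ i)).symm
      calc ∑ i, (x i) ^ 2 * ∏ k ∈ ({i}ᶜ : Finset (Fin n)), ((a k) ^ 2 - lam j)
          = ∑ i, ((x i) ^ 2 / ((a i) ^ 2 - lam j)) * ∏ k, ((a k) ^ 2 - lam j) := by
            refine Finset.sum_congr rfl fun i _ => ?_
            rw [hsplit i, div_mul_eq_mul_div, mul_comm ((a i) ^ 2 - lam j),
              mul_div_assoc, mul_div_assoc, div_self (hne i), mul_one]
        _ = (∑ i, (x i) ^ 2 / ((a i) ^ 2 - lam j)) * ∏ k, ((a k) ^ 2 - lam j) := by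
            rw [Finset.sum_mul]
        _ = ∏ i, ((a i) ^ 2 - lam j) := by rw [hx j, one_mul]
    have hAe : A.eval (lam j) = (-1) ^ n * ∏ i, ((a i) ^ 2 - lam j) := by
      rw [hA, eval_prod]
      simp only [eval_sub, eval_X, eval_C]
      calc ∏ i, (lam j - (a i) ^ 2) = ∏ i, (-1) * ((a i) ^ 2 - lam j) :=
            Finset.prod_congr rfl fun i _ => by ring
        _ = (-1) ^ n * ∏ i, ((a i) ^ 2 - lam j) := by
            rw [Finset.prod_mul_distrib, Finset.prod_const, Finset.card_univ, Fintype.card_fin]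
    have hSe : S.eval (lam j)
        = (-1) ^ (n - 1) * ∑ i, (x i) ^ 2 * ∏ k ∈ ({i}ᶜ : Finset (Fin n)), ((a k) ^ 2 - lam j) := by
      rw [hS, eval_finset_sum, Finset.mul_sum]
      refine Finset.sum_congr rfl fun i _ => ?_
      rw [eval_mul, eval_C, eval_prod]
      have hcard : #({i}ᶜ : Finset (Fin n)) = n - 1 := by simp [Finset.card_compl]
      have : ∏ k ∈ ({i}ᶜ : Finset (Fin n)), (X - C ((a k) ^ 2)).eval (lam j)
          = (-1) ^ (n - 1) * ∏ k ∈ ({i}ᶜ : Finset (Fin n)), ((a k) ^ 2 - lam j) := by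
        simp only [eval_sub, eval_X, eval_C]
        calc ∏ k ∈ ({i}ᶜ : Finset (Fin n)), (lam j - (a k) ^ 2)
            = ∏ k ∈ ({i}ᶜ : Finset (Fin n)), (-1) * ((a k) ^ 2 - lam j) :=
              Finset.prod_congr rfl fun k _ => by ring
          _ = (-1) ^ (n - 1) * ∏ k ∈ ({i}ᶜ : Finset (Fin n)), ((a k) ^ 2 - lam j) := by
              rw [Finset.prod_mul_distrib, Finset.prod_const, hcard]
      rw [this]; ring
    have hsign : (-1 : ℝ) ^ n = -(-1) ^ (n - 1) := by
      have h : n - 1 + 1 = n := Nat.succ_pred_eq_of_pos hn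
      calc (-1 : ℝ) ^ n = (-1) ^ (n - 1 + 1) := by rw [h]
        _ = -(-1) ^ (n - 1) := by rw [pow_succ]; ring
    rw [eval_add, hAe, hSe, h2, hsign]; ring
  -- A + S = B
  have hFmonic : (A + S).Monic :=
    hAmonic.add_of_left (by rwa [degree_eq_natDegree hAmonic.ne_zero, hAdeg])
  have hFdegree : (A + S).degree = (n : WithBot ℕ) := by
    rw [degree_add_eq_left_of_degree_lt
      (by rwa [degree_eq_natDegree hAmonic.ne_zero, hAdeg]),
      degree_eq_natDegree hAmonic.ne_zero, hAdeg]
  have hFdeg : (A + S).natDegree = n := natDegree_eq_of_degree_eq_some hFdegree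
  have hFB : A + S = B := by
    have hz : A + S - B = 0 := by
      rcases eq_or_ne (A + S - B) 0 with h | h
      · exact h
      apply eq_zero_of_natDegree_lt_card_of_eval_eq_zero _ hinj
      · intro j
        rw [eval_sub, hroot j, zero_sub, neg_eq_zero, hB, eval_prod]
        exact Finset.prod_eq_zero (Finset.mem_univ j) (by simp)
      · rw [Fintype.card_fin, natDegree_lt_iff_degree_lt h]
        have hdeq : (A + S).degree = B.degree := by
          rw [hFdegree, degree_eq_natDegree hBmonic.ne_zero, hBdeg]
        have hd := degree_sub_lt hdeq hFmonic.ne_zero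
          (hFmonic.leadingCoeff.trans hBmonic.leadingCoeff.symm)
        rwa [hFdegree] at hd
    exact sub_eq_zero.mp hz
  -- compare coefficients at degree n - 1
  have hcoeffB : B.coeff (n - 1) = -∑ j, lam j := by
    have h1 : B.nextCoeff = -∑ j, lam j := prod_X_sub_C_nextCoeff lam
    rwa [nextCoeff, if_neg (by omega : ¬ B.natDegree = 0), hBdeg] at h1
  have hcoeffA : A.coeff (n - 1) = -∑ i, (a i) ^ 2 := by
    have h1 : A.nextCoeff = -∑ i, (a i) ^ 2 := prod_X_sub_C_nextCoeff _
    rwa [nextCoeff, if_neg (by omega : ¬ A.natDegree = 0), hAdeg] at h1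
  have hcoeffS : S.coeff (n - 1) = ∑ i, (x i) ^ 2 := by
    rw [hS, finset_sum_coeff]
    refine Finset.sum_congr rfl fun i _ => ?_
    rw [coeff_C_mul, ← hMideg i, (hMi i).coeff_natDegree, mul_one]
  have hkey := congrArg (fun p => Polynomial.coeff p (n - 1)) hFB
  simp only [coeff_add] at hkey
  rw [hcoeffA, hcoeffS, hcoeffB] at hkey
  rw [hnorm]
  linarith
end

section
/- Let a_1, …, a_n > 0, let ν, λ, μ ∈ ℝ be pairwise distinct with a_i² ∉ {ν, λ, μ} for all i, and let x ∈ ℝⁿ satisfy Σ_{i=1}^n x_i²/(a_i² − ν) = 1, Σ_{i=1}^n x_i²/(a_i² − λ) = 1, and Σ_{i=1}^n x_i²/(a_i² − μ) = 1. Then Σ_{i=1}^n x_i²/((a_i² − ν)(a_i² − λ)(a_i² − μ)) = 0. (Geometrically, with ν = 0: the normals at x of the confocals C(λ) and C(μ) are conjugate directions with respect to the ellipsoid Σ x_i²/a_i² = 1, so the axes of the central section of the ellipsoid parallel to its tangent hyperplane at x are parallel to the normals of the confocals through x.) -/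
/-- If a point lies on three pairwise distinct confocal quadrics `C(ν)`, `C(λ)`,
`C(μ)`, then `∑ x_i²/((a_i² − ν)(a_i² − λ)(a_i² − μ)) = 0`.  With `ν = 0` this
says that the normals at `x` of `C(λ)` and `C(μ)` are conjugate directions with
respect to the ellipsoid `∑ x_i²/a_i² = 1`, so the axes of the central section
of the ellipsoid parallel to its tangent hyperplane at `x` are parallel to the
normals of the confocals through `x`. -/
theorem central_section_axes_conjugacy
    (n : ℕ) (a : Fin n → ℝ) (ha : ∀ i, 0 < a i)
    (nu lam mu : ℝ) (hnl : nu ≠ lam) (hnm : nu ≠ mu) (hlm : lam ≠ mu)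
    (hn' : ∀ i, (a i) ^ 2 ≠ nu) (hl : ∀ i, (a i) ^ 2 ≠ lam)
    (hm : ∀ i, (a i) ^ 2 ≠ mu)
    (x : Fin n → ℝ)
    (h0 : ∑ i, (x i) ^ 2 / ((a i) ^ 2 - nu) = 1)
    (h1 : ∑ i, (x i) ^ 2 / ((a i) ^ 2 - lam) = 1)
    (h2 : ∑ i, (x i) ^ 2 / ((a i) ^ 2 - mu) = 1) :
    ∑ i, (x i) ^ 2 / (((a i) ^ 2 - nu) * ((a i) ^ 2 - lam) * ((a i) ^ 2 - mu))
      = 0 := by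
  have hnl' : nu - lam ≠ 0 := sub_ne_zero.2 hnl
  have hnm' : nu - mu ≠ 0 := sub_ne_zero.2 hnm
  have hlm' : lam - mu ≠ 0 := sub_ne_zero.2 hlm
  set c1 : ℝ := 1 / ((nu - lam) * (nu - mu)) with hc1
  set c2 : ℝ := 1 / ((lam - nu) * (lam - mu)) with hc2
  set c3 : ℝ := 1 / ((mu - nu) * (mu - lam)) with hc3
  have key : ∀ i : Fin n,
      (x i) ^ 2 / (((a i) ^ 2 - nu) * ((a i) ^ 2 - lam) * ((a i) ^ 2 - mu))
        = c1 * ((x i) ^ 2 / ((a i) ^ 2 - nu))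
          + c2 * ((x i) ^ 2 / ((a i) ^ 2 - lam))
          + c3 * ((x i) ^ 2 / ((a i) ^ 2 - mu)) := by
    intro i
    have h1' : (a i) ^ 2 - nu ≠ 0 := sub_ne_zero.2 (hn' i)
    have h2' : (a i) ^ 2 - lam ≠ 0 := sub_ne_zero.2 (hl i)
    have h3' : (a i) ^ 2 - mu ≠ 0 := sub_ne_zero.2 (hm i)
    have hln' : lam - nu ≠ 0 := sub_ne_zero.2 hnl.symm
    have hmn' : mu - nu ≠ 0 := sub_ne_zero.2 hnm.symm
    have hml' : mu - lam ≠ 0 := sub_ne_zero.2 hlm.symm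
    rw [hc1, hc2, hc3]
    field_simp
    ring
  calc ∑ i, (x i) ^ 2 / (((a i) ^ 2 - nu) * ((a i) ^ 2 - lam) * ((a i) ^ 2 - mu))
      = ∑ i, (c1 * ((x i) ^ 2 / ((a i) ^ 2 - nu))
          + c2 * ((x i) ^ 2 / ((a i) ^ 2 - lam))
          + c3 * ((x i) ^ 2 / ((a i) ^ 2 - mu))) := Finset.sum_congr rfl fun i _ => key i
    _ = c1 * ∑ i, (x i) ^ 2 / ((a i) ^ 2 - nu)
          + c2 * ∑ i, (x i) ^ 2 / ((a i) ^ 2 - lam)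
          + c3 * ∑ i, (x i) ^ 2 / ((a i) ^ 2 - mu) := by
        simp [Finset.sum_add_distrib, Finset.mul_sum]
    _ = c1 + c2 + c3 := by rw [h0, h1, h2]; ring
    _ = 0 := by
        have hln' : lam - nu ≠ 0 := sub_ne_zero.2 hnl.symm
        have hmn' : mu - nu ≠ 0 := sub_ne_zero.2 hnm.symm
        have hml' : mu - lam ≠ 0 := sub_ne_zero.2 hlm.symm
        rw [hc1, hc2, hc3]
        field_simp
        ring
end

section
/- Let a_1, …, a_n > 0 and let λ ≠ 0 be a real number with a_i² ≠ λ for all i. Suppose x ∈ ℝⁿ satisfies Σ_{i=1}^n x_i²/a_i² = 1 and Σ_{i=1}^n x_i²/(a_i² − λ) = 1. Then Σ_{i=1}^n x_i²/(a_i² (a_i² − λ)²) = (1/λ) · Σ_{i=1}^n x_i²/(a_i² − λ)². Consequently, the radius ρ of the ellipsoid Σ x_i²/a_i² = 1 in the direction of the normal n_λ(x) = (x_i/(a_i² − λ))_i of the confocal C(λ) at x (i.e., the ρ > 0 with ρ·n_λ(x)/‖n_λ(x)‖ on the ellipsoid) satisfies ρ² = λ: the squared semi-axes of the central section of the ellipsoid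 parallel to its tangent hyperplane at x are the confocal parameters of the confocals through x. -/
private lemma pf_aux (t lam x : ℝ) (ht : t ≠ 0) (hl : lam ≠ 0) (hd : t - lam ≠ 0) :
    x ^ 2 / (t * (t - lam) ^ 2)
      = (1 / lam) * (x ^ 2 / (t - lam) ^ 2)
        - (1 / lam ^ 2) * (x ^ 2 / (t - lam))
        + (1 / lam ^ 2) * (x ^ 2 / t) := by
  rw [div_eq_iff (by positivity : t * (t - lam) ^ 2 ≠ 0)]
  field_simp
  ring



/-- If `x` lies on the ellipsoid `∑ x_i²/a_i² = 1` and on the confocal `C(λ)`,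
then `∑ x_i²/(a_i²(a_i² − λ)²) = (1/λ) ∑ x_i²/(a_i² − λ)²`.  Consequently the
radius `ρ` of the ellipsoid in the direction of the normal `(x_i/(a_i² − λ))_i`
of `C(λ)` at `x` satisfies `ρ² = λ`: the squared semi-axes of the central
section parallel to the tangent hyperplane at `x` are the confocal parameters
of the confocals through `x`. -/
theorem central_section_semiaxes
    (n : ℕ) (a : Fin n → ℝ) (ha : ∀ i, 0 < a i)
    (lam : ℝ) (hlam0 : lam ≠ 0) (hlam : ∀ i, (a i) ^ 2 ≠ lam)
    (x : Fin n → ℝ)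
    (h0 : ∑ i, (x i) ^ 2 / (a i) ^ 2 = 1)
    (h1 : ∑ i, (x i) ^ 2 / ((a i) ^ 2 - lam) = 1) :
    (∑ i, (x i) ^ 2 / ((a i) ^ 2 * ((a i) ^ 2 - lam) ^ 2)
        = (1 / lam) * ∑ i, (x i) ^ 2 / ((a i) ^ 2 - lam) ^ 2) ∧
    (∀ ρ : ℝ, 0 < ρ →
      (∑ i, (ρ * (x i / ((a i) ^ 2 - lam)) /
          Real.sqrt (∑ j, (x j / ((a j) ^ 2 - lam)) ^ 2)) ^ 2 / (a i) ^ 2 = 1) →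
      ρ ^ 2 = lam) := by
  have ha2 : ∀ i, (a i) ^ 2 ≠ 0 := fun i => pow_ne_zero 2 (ha i).ne'
  have hd : ∀ i, (a i) ^ 2 - lam ≠ 0 := fun i => sub_ne_zero.2 (hlam i)
  have key : ∀ i, x i ^ 2 / ((a i) ^ 2 * ((a i) ^ 2 - lam) ^ 2)
      = (1 / lam) * (x i ^ 2 / ((a i) ^ 2 - lam) ^ 2)
        - (1 / lam ^ 2) * (x i ^ 2 / ((a i) ^ 2 - lam))
        + (1 / lam ^ 2) * (x i ^ 2 / (a i) ^ 2) := by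
    intro i
    exact pf_aux _ _ _ (ha2 i) hlam0 (hd i)
  have part1 : ∑ i, (x i) ^ 2 / ((a i) ^ 2 * ((a i) ^ 2 - lam) ^ 2)
      = (1 / lam) * ∑ i, (x i) ^ 2 / ((a i) ^ 2 - lam) ^ 2 := by
    calc ∑ i, (x i) ^ 2 / ((a i) ^ 2 * ((a i) ^ 2 - lam) ^ 2)
        = ∑ i, ((1 / lam) * (x i ^ 2 / ((a i) ^ 2 - lam) ^ 2)
            - (1 / lam ^ 2) * (x i ^ 2 / ((a i) ^ 2 - lam))
            + (1 / lam ^ 2) * (x i ^ 2 / (a i) ^ 2)) := by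
          exact Finset.sum_congr rfl fun i _ => key i
      _ = (1 / lam) * ∑ i, (x i) ^ 2 / ((a i) ^ 2 - lam) ^ 2
            - (1 / lam ^ 2) * ∑ i, (x i) ^ 2 / ((a i) ^ 2 - lam)
            + (1 / lam ^ 2) * ∑ i, (x i) ^ 2 / (a i) ^ 2 := by
          simp [Finset.sum_add_distrib, Finset.sum_sub_distrib, Finset.mul_sum]
      _ = (1 / lam) * ∑ i, (x i) ^ 2 / ((a i) ^ 2 - lam) ^ 2 := by
          rw [h0, h1]; ring
  refine ⟨part1, ?_⟩
  intro ρ hρ hsum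
  set N := ∑ j, (x j / ((a j) ^ 2 - lam)) ^ 2 with hN
  have hNnonneg : 0 ≤ N := Finset.sum_nonneg fun j _ => sq_nonneg _
  have hNpos : 0 < N := by
    rcases lt_or_eq_of_le hNnonneg with h | h
    · exact h
    · exfalso
      have hz : ∀ j ∈ Finset.univ, (x j / ((a j) ^ 2 - lam)) ^ 2 = 0 := by
        intro j _
        exact (Finset.sum_eq_zero_iff_of_nonneg fun j _ => sq_nonneg _).1 h.symm j
          (Finset.mem_univ j)
      have hx : ∀ j, x j = 0 := by
        intro j
        have := hz j (Finset.mem_univ j)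
        have : x j / ((a j) ^ 2 - lam) = 0 := by
          exact pow_eq_zero_iff (n := 2) (by norm_num) |>.1 this
        exact (div_eq_zero_iff.1 this).resolve_right (hd j)
      rw [Finset.sum_eq_zero (fun j _ => by rw [hx j]; simp)] at h1
      exact zero_ne_one h1
  have hs : Real.sqrt N ≠ 0 := (Real.sqrt_pos.2 hNpos).ne'
  have hs2 : Real.sqrt N ^ 2 = N := Real.sq_sqrt hNnonneg
  have hterm : ∀ i, (ρ * (x i / ((a i) ^ 2 - lam)) / Real.sqrt N) ^ 2 / (a i) ^ 2
      = (ρ ^ 2 / N) * (x i ^ 2 / ((a i) ^ 2 * ((a i) ^ 2 - lam) ^ 2)) := by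
    intro i
    rw [div_pow, mul_pow, div_pow, hs2]
    field_simp
  rw [Finset.sum_congr rfl fun i _ => hterm i, ← Finset.mul_sum, part1] at hsum
  have hNT : N = ∑ i, (x i) ^ 2 / ((a i) ^ 2 - lam) ^ 2 := by
    simp [hN, div_pow]
  rw [← hNT] at hsum
  have h2 : ρ ^ 2 / N * (1 / lam * N) = ρ ^ 2 / lam := by
    field_simp
  rw [h2] at hsum
  field_simp at hsum
  exact hsum
end

section
/- Let 0 < a_n < ⋯ < a_1, let λ_1, …, λ_n be distinct real numbers with a_i² ≠ λ_j for all i, j, and let x ∈ ℝⁿ satisfy Σ_{i=1}^n x_i²/(a_i² − λ_j) = 1 for every j. Then for every j ∈ {1, …, n}: Σ_{i=1}^n x_i²/(a_i² − λ_j)² = Π_{k ≠ j} (λ_k − λ_j) / Π_{i=1}^n (a_i² − λ_j). Equivalently, the squared distance (p_j)² = 1/‖n_{λ_j}(x)‖² from the origin to the tangent hyperplane of C(λ_j) at x equals Π_{i=1}^n (a_i² − λ_j) / Π_{k ≠ j} (λ_k − λ_j), a formula dual to the one expressing the squared coordinates x_i² through the confocal parameters. -/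
open Polynomial Finset

lemma prod_neg_helper {α : Type*} (s : Finset α) (f : α → ℝ) :
    ∏ m ∈ s, (-(f m)) = (-1) ^ s.card * ∏ m ∈ s, f m := by
  rw [← Finset.prod_const, ← Finset.prod_mul_distrib]
  simp

/-- Duality of confocal systems: if `x` lies on all `n` confocal quadrics
`C(λ_j)`, then for every `j`,
`∑ x_i²/(a_i² − λ_j)² = Π_{k ≠ j}(λ_k − λ_j) / Π_i (a_i² − λ_j)`; equivalently
the squared distance `p_j² = 1/‖n_{λ_j}(x)‖²` from the origin to the tangent
hyperplane of `C(λ_j)` at `x` equals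
`Π_i (a_i² − λ_j) / Π_{k ≠ j}(λ_k − λ_j)`. -/
theorem tangent_hyperplane_distance_duality
    (n : ℕ) (a : Fin n → ℝ) (ha : ∀ i, 0 < a i)
    (hmono : ∀ i j : Fin n, i < j → a j < a i)
    (lam : Fin n → ℝ) (hinj : Function.Injective lam)
    (hreg : ∀ i j, (a i) ^ 2 ≠ lam j)
    (x : Fin n → ℝ)
    (hx : ∀ j, ∑ i, (x i) ^ 2 / ((a i) ^ 2 - lam j) = 1) :
    ∀ j : Fin n,
      (∑ i, (x i) ^ 2 / ((a i) ^ 2 - lam j) ^ 2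
        = (∏ k ∈ Finset.univ.erase j, (lam k - lam j))
            / ∏ i, ((a i) ^ 2 - lam j)) ∧
      (1 / ∑ i, (x i / ((a i) ^ 2 - lam j)) ^ 2
        = (∏ i, ((a i) ^ 2 - lam j))
            / ∏ k ∈ Finset.univ.erase j, (lam k - lam j)) := by
  intro j
  classical
  have hne : ∀ i k, (a i) ^ 2 - lam k ≠ 0 := fun i k => sub_ne_zero.2 (hreg i k)
  set b : Fin n → ℝ := fun i => x i ^ 2 / ((a i) ^ 2 - lam j) with hbdef
  have hcard : ∀ i : Fin n, (Finset.univ.erase i).card = n - 1 := fun i => by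
    rw [Finset.card_erase_of_mem (Finset.mem_univ i), Finset.card_univ, Fintype.card_fin]
  -- the key polynomial
  set P : ℝ[X] :=
    (∑ i, C (b i) * ∏ m ∈ Finset.univ.erase i, (X - C ((a m) ^ 2)))
      - ∏ k ∈ Finset.univ.erase j, (X - C (lam k)) with hPdef
  -- monic products
  have hmon : ∀ (c : Fin n → ℝ) (i : Fin n),
      (∏ m ∈ Finset.univ.erase i, (X - C (c m))).Monic :=
    fun c i => monic_prod_of_monic _ _ fun m _ => monic_X_sub_C _
  have hdeg : ∀ (c : Fin n → ℝ) (i : Fin n),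
      (∏ m ∈ Finset.univ.erase i, (X - C (c m))).natDegree = n - 1 := by
    intro c i
    rw [natDegree_prod_of_monic _ _ fun m _ => monic_X_sub_C _]
    simp [hcard i]
  -- degree bound
  have hdegP : P.degree < ((n - 1 : ℕ) : WithBot ℕ) := by
    rw [degree_lt_iff_coeff_zero]
    intro m hm
    rcases eq_or_lt_of_le hm with hm | hm
    · -- m = n - 1 : coefficients coincide
      rw [hPdef, coeff_sub, finset_sum_coeff]
      have h1 : ∀ i : Fin n,
          (C (b i) * ∏ m' ∈ Finset.univ.erase i, (X - C ((a m') ^ 2))).coeff m = b i := by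
        intro i
        rw [coeff_C_mul, ← hm, ← hdeg (fun m' => (a m') ^ 2) i,
          Monic.coeff_natDegree (hmon _ i), mul_one]
      rw [Finset.sum_congr rfl fun i _ => h1 i]
      have h2 : (∏ k ∈ Finset.univ.erase j, (X - C (lam k))).coeff m = 1 := by
        rw [← hm, ← hdeg lam j, Monic.coeff_natDegree (hmon _ j)]
      rw [h2]
      have h3 : ∑ i, b i = 1 := by rw [hbdef]; exact hx j
      rw [h3, sub_self]
    · -- m > n - 1 : both coefficients vanish
      rw [hPdef, coeff_sub, finset_sum_coeff]
      have h1 : ∀ i : Fin n,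
          (C (b i) * ∏ m' ∈ Finset.univ.erase i, (X - C ((a m') ^ 2))).coeff m = 0 := by
        intro i
        rw [coeff_C_mul, coeff_eq_zero_of_natDegree_lt, mul_zero]
        rw [hdeg]; exact_mod_cast hm
      rw [Finset.sum_congr rfl fun i _ => h1 i, Finset.sum_const, smul_zero,
        coeff_eq_zero_of_natDegree_lt, sub_self]
      rw [hdeg]; exact_mod_cast hm
  -- roots
  have hroots : ∀ l ∈ Finset.univ.erase j, P.eval (lam l) = 0 := by
    intro l hl
    have hlj : l ≠ j := Finset.ne_of_mem_erase hl
    have hlamne : lam l - lam j ≠ 0 := sub_ne_zero.2 (fun h => hlj (hinj h))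
    rw [hPdef]
    simp only [eval_sub, eval_finset_sum, eval_mul, eval_C, eval_prod, eval_sub, eval_X]
    have hR : ∏ k ∈ Finset.univ.erase j, (lam l - lam k) = 0 :=
      Finset.prod_eq_zero hl (by rw [sub_self])
    rw [hR, sub_zero]
    -- the sum vanishes
    have hterm : ∀ i : Fin n,
        b i * ∏ m ∈ Finset.univ.erase i, (lam l - (a m) ^ 2)
          = (∏ m, (lam l - (a m) ^ 2)) *
            ((1 / (lam l - lam j)) *
              (x i ^ 2 / ((a i) ^ 2 - lam j) - x i ^ 2 / ((a i) ^ 2 - lam l))) := by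
      intro i
      rw [← Finset.prod_erase_mul Finset.univ (fun m => lam l - (a m) ^ 2) (Finset.mem_univ i)]
      have hil : lam l - (a i) ^ 2 ≠ 0 := fun h => hne i l (by linarith [sub_eq_zero.1 h])
      have hil2 : (a i) ^ 2 - lam l ≠ 0 := hne i l
      have hij2 : (a i) ^ 2 - lam j ≠ 0 := hne i j
      rw [hbdef]
      field_simp
      ring
    rw [Finset.sum_congr rfl fun i _ => hterm i, ← Finset.mul_sum, ← Finset.mul_sum,
      Finset.sum_sub_distrib, hx j, hx l, sub_self, mul_zero, mul_zero]
  -- conclude P = 0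
  have hP0 : P = 0 := by
    refine Polynomial.eq_zero_of_degree_lt_of_eval_index_eq_zero _ ?_ ?_ hroots
    · exact fun _ _ _ _ h => hinj h
    · rwa [hcard j]
  -- evaluate at lam j
  have hEval : ∑ i, b i * ∏ m ∈ Finset.univ.erase i, (lam j - (a m) ^ 2)
      = ∏ k ∈ Finset.univ.erase j, (lam j - lam k) := by
    have := congrArg (Polynomial.eval (lam j)) hP0
    rw [hPdef] at this
    simp only [eval_sub, eval_finset_sum, eval_mul, eval_C, eval_prod, eval_sub, eval_X,
      eval_zero] at this
    linarith [this]
  -- remove signs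
  have hsign : (-1 : ℝ) ^ (n - 1) ≠ 0 := pow_ne_zero _ (by norm_num)
  have hEval' : ∑ i, b i * ∏ m ∈ Finset.univ.erase i, ((a m) ^ 2 - lam j)
      = ∏ k ∈ Finset.univ.erase j, (lam k - lam j) := by
    apply mul_left_cancel₀ hsign
    rw [Finset.mul_sum]
    calc ∑ i, (-1 : ℝ) ^ (n - 1) * (b i * ∏ m ∈ Finset.univ.erase i, ((a m) ^ 2 - lam j))
        = ∑ i, b i * ∏ m ∈ Finset.univ.erase i, (lam j - (a m) ^ 2) := by
          refine Finset.sum_congr rfl fun i _ => ?_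
          have : ∏ m ∈ Finset.univ.erase i, (lam j - (a m) ^ 2)
              = ∏ m ∈ Finset.univ.erase i, (-(((a m) ^ 2 - lam j))) := by
            refine Finset.prod_congr rfl fun m _ => by ring
          rw [this, prod_neg_helper, hcard i]; ring
      _ = ∏ k ∈ Finset.univ.erase j, (lam j - lam k) := hEval
      _ = (-1 : ℝ) ^ (n - 1) * ∏ k ∈ Finset.univ.erase j, (lam k - lam j) := by
          have : ∏ k ∈ Finset.univ.erase j, (lam j - lam k)
              = ∏ k ∈ Finset.univ.erase j, (-(lam k - lam j)) := by
            refine Finset.prod_congr rfl fun k _ => by ring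
          rw [this, prod_neg_helper, hcard j]
  -- relate to the sum of squares
  have hD : (∏ i, ((a i) ^ 2 - lam j)) ≠ 0 :=
    Finset.prod_ne_zero_iff.2 fun i _ => hne i j
  have hsum : ∑ i, b i * ∏ m ∈ Finset.univ.erase i, ((a m) ^ 2 - lam j)
      = (∑ i, x i ^ 2 / ((a i) ^ 2 - lam j) ^ 2) * ∏ i, ((a i) ^ 2 - lam j) := by
    rw [Finset.sum_mul]
    refine Finset.sum_congr rfl fun i _ => ?_
    rw [← Finset.prod_erase_mul Finset.univ (fun m => (a m) ^ 2 - lam j) (Finset.mem_univ i),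
      hbdef]
    have := hne i j
    field_simp
  have first : ∑ i, x i ^ 2 / ((a i) ^ 2 - lam j) ^ 2
      = (∏ k ∈ Finset.univ.erase j, (lam k - lam j)) / ∏ i, ((a i) ^ 2 - lam j) := by
    rw [eq_div_iff hD, ← hsum, hEval']
  refine ⟨first, ?_⟩
  have hsq : ∑ i, (x i / ((a i) ^ 2 - lam j)) ^ 2
      = ∑ i, x i ^ 2 / ((a i) ^ 2 - lam j) ^ 2 :=
    Finset.sum_congr rfl fun i _ => by rw [div_pow]
  rw [hsq, first, one_div_div]
end

section
/- Let n ≥ 2, let a_1, …, a_n > 0, let λ > 0, and let u, x ∈ ℝⁿ satisfy Σ_{i=1}^n x_i²/(λ a_i)² = 1. Suppose the normal line of the ellipsoid E(λ) = {y : Σ_i y_i²/(λ a_i)² = 1} at x passes through u; i.e., there is t ∈ ℝ with u_i − x_i = t · x_i/(λ a_i)² for every i. Then for every i ∈ {2, …, n}: (a_1² − a_i²) x_1 x_i + a_i² u_i x_1 − a_1² u_1 x_i = 0. Hence the locus of foot points of u on the homothetic family of ellipsoids E(λ), λ > 0 (the Apollonian curve of the family) satisfies this system of equations, which is independent of λ.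 -/
/-- The Apollonian curve of a homothetic family of ellipsoids: if the normal
line of the ellipsoid `E(λ) : ∑ y_i²/(λ a_i)² = 1` at its point `x` passes
through `u`, then for every `i ≥ 2`,
`(a_1² − a_i²) x_1 x_i + a_i² u_i x_1 − a_1² u_1 x_i = 0`, a system of
equations independent of `λ`. -/
theorem apollonian_curve_equations
    (n : ℕ) (hn : 2 ≤ n)
    (a : Fin n → ℝ) (ha : ∀ i, 0 < a i)
    (lam : ℝ) (hlam : 0 < lam)
    (u x : Fin n → ℝ)
    (hx : ∑ i, (x i) ^ 2 / (lam * a i) ^ 2 = 1)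
    (t : ℝ) (hnormal : ∀ i, u i - x i = t * (x i / (lam * a i) ^ 2))
    (i : Fin n) (hi : i ≠ ⟨0, by omega⟩) :
    ((a ⟨0, by omega⟩) ^ 2 - (a i) ^ 2) * x ⟨0, by omega⟩ * x i
        + (a i) ^ 2 * u i * x ⟨0, by omega⟩
        - (a ⟨0, by omega⟩) ^ 2 * u ⟨0, by omega⟩ * x i = 0 := by
  set j : Fin n := ⟨0, by omega⟩
  have h0 := hnormal j
  have h1 := hnormal i
  have ha0 := (ha j).ne'
  have hai := (ha i).ne'
  have hlam' := hlam.ne'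
  have e0 : (u j - x j) * (lam * a j) ^ 2 = t * x j := by
    field_simp at h0; linarith
  have e1 : (u i - x i) * (lam * a i) ^ 2 = t * x i := by
    field_simp at h1; linarith
  have hl2 : lam ^ 2 ≠ 0 := pow_ne_zero 2 hlam'
  have key : lam ^ 2 * (((a j) ^ 2 - (a i) ^ 2) * x j * x i
      + (a i) ^ 2 * u i * x j - (a j) ^ 2 * u j * x i) = 0 := by
    linear_combination x j * e1 - x i * e0
  exact (mul_eq_zero.mp key).resolve_left hl2
end

section
/- Let m, n ≥ 1, let r : ℝᵐ → ℝⁿ be differentiable at u₀ ∈ ℝᵐ, let F, P ∈ ℝⁿ, and set Q = r(u₀); assume Q ≠ F and Q ≠ P. If u₀ is a local minimum point of the function u ↦ ‖F − r(u)‖ + ‖r(u) − P‖ (Euclidean norms), then the vector (Q − F)/‖Q − F‖ + (Q − P)/‖Q − P‖ is orthogonal to the range of the derivative of r at u₀; i.e., ⟨(Q − F)/‖Q − F‖ + (Q − P)/‖Q − P‖, Dr(u₀)v⟩ = 0 for every v ∈ ℝᵐ. Consequently, for a parametrized hypersurface this vector is normal to the surface at Q, and the angles between a normal vector of the surface at Q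 and the segments QF and QP are equal (the fastened-string reflection property). -/
lemma hasFDerivAt_norm_of_ne {E : Type*} [NormedAddCommGroup E] [InnerProductSpace ℝ E]
    {x : E} (hx : x ≠ 0) :
    HasFDerivAt (fun y : E => ‖y‖) (innerSL ℝ (‖x‖⁻¹ • x)) x := by
  have hx2 : (‖x‖ ^ 2 : ℝ) ≠ 0 := pow_ne_zero 2 (norm_ne_zero_iff.2 hx)
  have h1 := (hasStrictFDerivAt_norm_sq x).hasFDerivAt
  have h2 : HasDerivAt Real.sqrt (1 / (2 * Real.sqrt (‖x‖ ^ 2))) (‖x‖ ^ 2) :=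
    Real.hasDerivAt_sqrt hx2
  have h3 := h2.comp_hasFDerivAt x h1
  have h3' : HasFDerivAt (fun y : E => Real.sqrt (‖y‖ ^ 2))
      ((1 / (2 * Real.sqrt (‖x‖ ^ 2))) • 2 • (innerSL ℝ) x) x := h3
  have hfun : (fun y : E => Real.sqrt (‖y‖ ^ 2)) = fun y : E => ‖y‖ := by
    funext y; exact Real.sqrt_sq (norm_nonneg y)
  rw [hfun] at h3'
  convert h3' using 1
  ext v
  have hs : Real.sqrt (‖x‖ ^ 2) = ‖x‖ := Real.sqrt_sq (norm_nonneg x)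
  simp [hs, real_inner_smul_left, two_smul]
  field_simp
  ring

/-- The fastened-string reflection property: if `Q = r(u₀)` minimizes (locally)
the length of the broken line `F Q P` over a differentiably parametrized
surface `r`, then `(Q − F)/‖Q − F‖ + (Q − P)/‖Q − P‖` is orthogonal to the
range of the derivative of `r` at `u₀`, hence normal to the surface at `Q`;
so the angles between the normal and the segments `QF`, `QP` are equal. -/
theorem fastened_string_reflection
    (m n : ℕ) (hm : 1 ≤ m) (hn : 1 ≤ n)
    (r : EuclideanSpace ℝ (Fin m) → EuclideanSpace ℝ (Fin n))
    (u₀ : EuclideanSpace ℝ (Fin m))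
    (hr : DifferentiableAt ℝ r u₀)
    (F P Q : EuclideanSpace ℝ (Fin n)) (hQ : Q = r u₀)
    (hQF : Q ≠ F) (hQP : Q ≠ P)
    (hmin : IsLocalMin (fun u => ‖F - r u‖ + ‖r u - P‖) u₀) :
    ∀ v : EuclideanSpace ℝ (Fin m),
      (inner ℝ (‖Q - F‖⁻¹ • (Q - F) + ‖Q - P‖⁻¹ • (Q - P))
        (fderiv ℝ r u₀ v) : ℝ) = 0 := by
  intro v
  subst hQ
  set D := fderiv ℝ r u₀ with hD
  have hrD : HasFDerivAt r D u₀ := hr.hasFDerivAt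
  have h1 : HasFDerivAt (fun u => F - r u) (-D) u₀ := by
    exact ((hasFDerivAt_const F u₀).sub hrD).congr_fderiv (by simp)
  have h2 : HasFDerivAt (fun u => r u - P) D u₀ := by
    exact (hrD.sub (hasFDerivAt_const P u₀)).congr_fderiv (by simp)
  have hFQ : F - r u₀ ≠ 0 := sub_ne_zero.2 (Ne.symm hQF)
  have hQP' : r u₀ - P ≠ 0 := sub_ne_zero.2 hQP
  have hg1 : HasFDerivAt (fun u => ‖F - r u‖)
      ((innerSL ℝ (‖F - r u₀‖⁻¹ • (F - r u₀))).comp (-D)) u₀ :=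
    (hasFDerivAt_norm_of_ne hFQ).comp u₀ h1
  have hg2 : HasFDerivAt (fun u => ‖r u - P‖)
      ((innerSL ℝ (‖r u₀ - P‖⁻¹ • (r u₀ - P))).comp D) u₀ :=
    (hasFDerivAt_norm_of_ne hQP').comp u₀ h2
  have hg : HasFDerivAt (fun u => ‖F - r u‖ + ‖r u - P‖)
      ((innerSL ℝ (‖F - r u₀‖⁻¹ • (F - r u₀))).comp (-D)
        + (innerSL ℝ (‖r u₀ - P‖⁻¹ • (r u₀ - P))).comp D) u₀ := hg1.add hg2
  have hzero := hmin.fderiv_eq_zero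
  rw [hg.fderiv] at hzero
  have hv := DFunLike.congr_fun hzero v
  simp only [ContinuousLinearMap.add_apply, ContinuousLinearMap.comp_apply,
    ContinuousLinearMap.neg_apply, ContinuousLinearMap.zero_apply, innerSL_apply_apply] at hv
  have hnorm : ‖F - r u₀‖ = ‖r u₀ - F‖ := by rw [← norm_neg]; congr 1; abel
  rw [inner_add_left]
  have : (inner ℝ (‖r u₀ - F‖⁻¹ • (r u₀ - F)) (D v) : ℝ)
      = inner ℝ (‖F - r u₀‖⁻¹ • (F - r u₀)) (-(D v)) := by
    rw [inner_neg_right, real_inner_smul_left, real_inner_smul_left, hnorm]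
    have : (inner ℝ (F - r u₀) (D v) : ℝ) = - inner ℝ (r u₀ - F) (D v) := by
      rw [← inner_neg_left]; congr 1; abel
    rw [this]; ring
  rw [this]
  linarith [hv]
end

section
/- Let 0 < c < b < a, and use the parametrizations E(u) of the focal ellipse and H_ε(v) of the branches of the focal hyperbola. (i) If H₁ = H_ε(v₁) and H₂ = H_ε(v₂) lie on the same branch of the focal hyperbola, then for every point E = E(u) of the focal ellipse the difference ‖H₁ − E‖ − ‖E − H₂‖ equals √(a²−c²)(cosh v₁ − cosh v₂), independently of u. (ii) If H₁ = H_{+1}(v₁) and H₂ = H_{−1}(v₂) lie on different branches, then the sum ‖H₁ − E‖ + ‖E − H₂‖ equals √(a²−c²)(cosh v₁ + cosh v₂), independently of u. (iii) If E₁ = E(u₁), E₂ = E(u₂) lie on the focal ellipse and H = H_ε(v) on the focal hyperbola, then ‖E₁ − H‖ − ‖H − E₂‖ = ε√(a²−b²)(cos u₂ − cos u₁), independently of v. -/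
set_option maxHeartbeats 1000000

open Real

lemma staude_key_dist (a b c ε u v : ℝ) (hc : 0 < c) (hcb : c < b) (hba : b < a)
    (hε : ε = 1 ∨ ε = -1) (X Y : EuclideanSpace ℝ (Fin 3))
    (hX : X = ![ε * Real.sqrt (a ^ 2 - b ^ 2) * Real.cosh v, 0,
        Real.sqrt (b ^ 2 - c ^ 2) * Real.sinh v])
    (hY : Y = ![Real.sqrt (a ^ 2 - c ^ 2) * Real.cos u,
        Real.sqrt (b ^ 2 - c ^ 2) * Real.sin u, 0]) :
    ‖X - Y‖
      = Real.sqrt (a ^ 2 - c ^ 2) * Real.cosh v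
        - ε * Real.sqrt (a ^ 2 - b ^ 2) * Real.cos u := by
  have hb : 0 < b := hc.trans hcb
  have hpq : (0:ℝ) < a ^ 2 - b ^ 2 := by nlinarith
  have hq : (0:ℝ) < b ^ 2 - c ^ 2 := by nlinarith
  have hac : (0:ℝ) < a ^ 2 - c ^ 2 := by nlinarith
  set sp := Real.sqrt (a ^ 2 - b ^ 2) with hsp
  set sq := Real.sqrt (b ^ 2 - c ^ 2) with hsq
  set sc := Real.sqrt (a ^ 2 - c ^ 2) with hsc
  have hsp2 : sp ^ 2 = a ^ 2 - b ^ 2 := Real.sq_sqrt hpq.le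
  have hsq2 : sq ^ 2 = b ^ 2 - c ^ 2 := Real.sq_sqrt hq.le
  have hsc2 : sc ^ 2 = a ^ 2 - c ^ 2 := Real.sq_sqrt hac.le
  have hsple : sp ≤ sc := Real.sqrt_le_sqrt (by nlinarith)
  have hsp0 : 0 ≤ sp := Real.sqrt_nonneg _
  have hsc0 : 0 ≤ sc := Real.sqrt_nonneg _
  have hε2 : ε ^ 2 = 1 := by rcases hε with h | h <;> rw [h] <;> norm_num
  have hcosh : 1 ≤ Real.cosh v := Real.one_le_cosh v
  have hsinh : Real.sinh v ^ 2 = Real.cosh v ^ 2 - 1 := by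
    have := Real.cosh_sq_sub_sinh_sq v; linarith
  have hsin : Real.sin u ^ 2 = 1 - Real.cos u ^ 2 := by
    have := Real.sin_sq_add_cos_sq u; linarith
  have h1 : ε * Real.cos u ≤ 1 := by
    rcases hε with h | h <;> rw [h] <;>
      nlinarith [Real.neg_one_le_cos u, Real.cos_le_one u]
  have hRnn : 0 ≤ sc * Real.cosh v - ε * sp * Real.cos u := by
    nlinarith [Real.cos_le_one u, Real.neg_one_le_cos u]
  have hsum : (∑ i, ‖(X - Y) i‖ ^ 2)
      = (sc * Real.cosh v - ε * sp * Real.cos u) ^ 2 := by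
    simp only [hX, hY, Fin.sum_univ_three, PiLp.sub_apply, Matrix.cons_val_zero,
      Matrix.cons_val_one, Matrix.head_cons, Matrix.cons_val_two, Matrix.tail_cons,
      Real.norm_eq_abs, sq_abs]
    linear_combination (sp ^ 2 * (Real.cosh v ^ 2 - Real.cos u ^ 2)) * hε2
      + sq ^ 2 * hsin + sq ^ 2 * hsinh
      + (Real.cosh v ^ 2 - Real.cos u ^ 2) * (hsp2 + hsq2 - hsc2)
  rw [EuclideanSpace.norm_eq, hsum, Real.sqrt_sq hRnn]

/-- For the focal conics of a confocal system with `0 < c < b < a`, with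
`E(u)` on the focal ellipse and `H_ε(v)` on the branch `ε` of the focal
hyperbola:
(i) for two points on the same branch of the hyperbola, the difference
`‖H₁ − E‖ − ‖E − H₂‖` is independent of the point `E` of the ellipse;
(ii) for two points on different branches, the sum `‖H₁ − E‖ + ‖E − H₂‖` is
independent of `E`;
(iii) for two points on the ellipse, the difference `‖E₁ − H‖ − ‖H − E₂‖` is
independent of the point `H` of the hyperbola. -/
theorem staude_string_differences
    (a b c : ℝ) (hc : 0 < c) (hcb : c < b) (hba : b < a)
    (E : ℝ → EuclideanSpace ℝ (Fin 3))
    (hE : ∀ u, E u = ![Real.sqrt (a ^ 2 - c ^ 2) * Real.cos u,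
      Real.sqrt (b ^ 2 - c ^ 2) * Real.sin u, 0])
    (H : ℝ → ℝ → EuclideanSpace ℝ (Fin 3))
    (hH : ∀ ε v, H ε v = ![ε * Real.sqrt (a ^ 2 - b ^ 2) * Real.cosh v, 0,
      Real.sqrt (b ^ 2 - c ^ 2) * Real.sinh v]) :
    (∀ ε : ℝ, (ε = 1 ∨ ε = -1) → ∀ v₁ v₂ u : ℝ,
        ‖H ε v₁ - E u‖ - ‖E u - H ε v₂‖
          = Real.sqrt (a ^ 2 - c ^ 2) * (Real.cosh v₁ - Real.cosh v₂)) ∧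
    (∀ v₁ v₂ u : ℝ,
        ‖H 1 v₁ - E u‖ + ‖E u - H (-1) v₂‖
          = Real.sqrt (a ^ 2 - c ^ 2) * (Real.cosh v₁ + Real.cosh v₂)) ∧
    (∀ ε : ℝ, (ε = 1 ∨ ε = -1) → ∀ u₁ u₂ v : ℝ,
        ‖E u₁ - H ε v‖ - ‖H ε v - E u₂‖
          = ε * Real.sqrt (a ^ 2 - b ^ 2) * (Real.cos u₂ - Real.cos u₁)) := by
  have key : ∀ ε : ℝ, (ε = 1 ∨ ε = -1) → ∀ u v : ℝ,
      ‖H ε v - E u‖ = Real.sqrt (a ^ 2 - c ^ 2) * Real.cosh v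
        - ε * Real.sqrt (a ^ 2 - b ^ 2) * Real.cos u := by
    intro ε hε u v
    exact staude_key_dist a b c ε u v hc hcb hba hε _ _ (hH ε v) (hE u)
  have key' : ∀ ε : ℝ, (ε = 1 ∨ ε = -1) → ∀ u v : ℝ,
      ‖E u - H ε v‖ = Real.sqrt (a ^ 2 - c ^ 2) * Real.cosh v
        - ε * Real.sqrt (a ^ 2 - b ^ 2) * Real.cos u := by
    intro ε hε u v
    rw [← norm_neg, neg_sub]; exact key ε hε u v
  refine ⟨fun ε hε v₁ v₂ u => ?_, fun v₁ v₂ u => ?_, fun ε hε u₁ u₂ v => ?_⟩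
  · rw [key ε hε u v₁, key' ε hε u v₂]; ring
  · rw [key 1 (Or.inl rfl) u v₁, key' (-1) (Or.inr rfl) u v₂]; ring
  · rw [key' ε hε u₁ v, key ε hε u₂ v]; ring
end

section
/- Let 0 < c < b < a. Let C₃ = {(x,y,0) ∈ ℝ³ : x²/(a²−c²) + y²/(b²−c²) = 1} be the focal ellipse and C₂ = {(x,0,z) ∈ ℝ³ : x²/(a²−b²) − z²/(b²−c²) = 1} the focal hyperbola of the confocal system of the ellipsoid x²/a² + y²/b² + z²/c² = 1. Let v ∈ ℝ³ be a point with v₃ ≠ 0 (v not in the plane of the focal ellipse). Then the cone of lines joining v to the points of C₃ is a right circular cone — i.e., there exist a unit vector d ∈ ℝ³ and a constant γ ∈ ℝ such that ⟨e − v, d⟩² = γ ‖e − v‖² for every e ∈ C₃ — if and only if v ∈ C₂. Thus the locus of apices of right cones through the focal ellipse is the focal hyperbola. -/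
private lemma inner3 (x y : EuclideanSpace ℝ (Fin 3)) :
    (inner ℝ x y : ℝ) = x 0 * y 0 + x 1 * y 1 + x 2 * y 2 := by
  simp [PiLp.inner_apply, Fin.sum_univ_three, RCLike.inner_apply, mul_comm]

private lemma nsq3 (x : EuclideanSpace ℝ (Fin 3)) :
    ‖x‖ ^ 2 = (x 0) ^ 2 + (x 1) ^ 2 + (x 2) ^ 2 := by
  rw [← real_inner_self_eq_norm_sq, inner3]; ring

set_option maxHeartbeats 1000000 in
/-- The locus of apices of right circular cones through the focal ellipse
`C₃ : x²/(a²−c²) + y²/(b²−c²) = 1, z = 0` is the focal hyperbola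
`C₂ : x²/(a²−b²) − z²/(b²−c²) = 1, y = 0`: for a point `v` outside the plane
of the focal ellipse, the cone of lines joining `v` to the points of `C₃` is
right circular (i.e. there are a unit vector `d` and a constant `γ` with
`⟨e − v, d⟩² = γ‖e − v‖²` for all `e ∈ C₃`) if and only if `v ∈ C₂`. -/
theorem right_circular_cones_through_focal_ellipse
    (a b c : ℝ) (hc : 0 < c) (hcb : c < b) (hba : b < a)
    (v : EuclideanSpace ℝ (Fin 3)) (hv : v 2 ≠ 0) :
    (∃ d : EuclideanSpace ℝ (Fin 3), ‖d‖ = 1 ∧ ∃ γ : ℝ,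
        ∀ e : EuclideanSpace ℝ (Fin 3),
          (e 0) ^ 2 / (a ^ 2 - c ^ 2) + (e 1) ^ 2 / (b ^ 2 - c ^ 2) = 1 →
          e 2 = 0 →
          (inner ℝ (e - v) d : ℝ) ^ 2 = γ * ‖e - v‖ ^ 2) ↔
      ((v 0) ^ 2 / (a ^ 2 - b ^ 2) - (v 2) ^ 2 / (b ^ 2 - c ^ 2) = 1
        ∧ v 1 = 0) := by
  have hα : (0:ℝ) < a ^ 2 - c ^ 2 := by nlinarith
  have hβ : (0:ℝ) < b ^ 2 - c ^ 2 := by nlinarith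
  have hφ : (0:ℝ) < a ^ 2 - b ^ 2 := by nlinarith
  set p := v 0 with hp
  set q := v 1 with hq
  set r := v 2 with hr
  have hr2 : (0:ℝ) < r ^ 2 := lt_of_le_of_ne (sq_nonneg r) (by simpa using (pow_ne_zero 2 hv).symm)
  constructor
  · rintro ⟨d, hd, γ, h⟩
    set d0 := d 0 with hd0
    set d1 := d 1 with hd1
    set d2 := d 2 with hd2
    have hdu : d0 ^ 2 + d1 ^ 2 + d2 ^ 2 = 1 := by
      have := nsq3 d
      rw [hd] at this; simpa using this.symm
    -- scalar form of the cone condition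
    have key : ∀ x y : ℝ, x ^ 2 * (b ^ 2 - c ^ 2) + y ^ 2 * (a ^ 2 - c ^ 2)
          = (a ^ 2 - c ^ 2) * (b ^ 2 - c ^ 2) →
        ((x - p) * d0 + (y - q) * d1 - r * d2) ^ 2
          = γ * ((x - p) ^ 2 + (y - q) ^ 2 + r ^ 2) := by
      intro x y hxy
      have h' := h (!₂[x, y, 0]) (by
        field_simp
        simp only [Matrix.cons_val_zero, Matrix.cons_val_one]
        linear_combination hxy) (by simp)
      rw [inner3, nsq3] at h'
      simp at h'
      linear_combination h'
    set A := Real.sqrt (a ^ 2 - c ^ 2) with hA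
    set B := Real.sqrt (b ^ 2 - c ^ 2) with hB
    have hA2 : A ^ 2 = a ^ 2 - c ^ 2 := Real.sq_sqrt hα.le
    have hB2 : B ^ 2 = b ^ 2 - c ^ 2 := Real.sq_sqrt hβ.le
    have hApos : 0 < A := Real.sqrt_pos.mpr hα
    have hBpos : 0 < B := Real.sqrt_pos.mpr hβ
    have H1 := key A 0 (by linear_combination (b ^ 2 - c ^ 2) * hA2)
    have H2 := key (-A) 0 (by linear_combination (b ^ 2 - c ^ 2) * hA2)
    have H3 := key 0 B (by linear_combination (a ^ 2 - c ^ 2) * hB2)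
    have H4 := key 0 (-B) (by linear_combination (a ^ 2 - c ^ 2) * hB2)
    have H5 := key (3 / 5 * A) (4 / 5 * B)
      (by linear_combination (9 / 25 * (b ^ 2 - c ^ 2)) * hA2 + (16 / 25 * (a ^ 2 - c ^ 2)) * hB2)
    have H6 := key (3 / 5 * A) (-(4 / 5 * B))
      (by linear_combination (9 / 25 * (b ^ 2 - c ^ 2)) * hA2 + (16 / 25 * (a ^ 2 - c ^ 2)) * hB2)
    set s := p * d0 + q * d1 + r * d2 with hs
    -- d0 * s = γ * p
    have e12 : A * (d0 * s - γ * p) = 0 := by linear_combination (H2 - H1) / 4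
    have hd0s : d0 * s = γ * p := by
      rcases mul_eq_zero.mp e12 with h' | h'
      · exact absurd h' hApos.ne'
      · linarith [sub_eq_zero.mp h']
    have e34 : B * (d1 * s - γ * q) = 0 := by linear_combination (H4 - H3) / 4
    have hd1s : d1 * s = γ * q := by
      rcases mul_eq_zero.mp e34 with h' | h'
      · exact absurd h' hBpos.ne'
      · linarith [sub_eq_zero.mp h']
    have hsum1 : (a ^ 2 - c ^ 2) * d0 ^ 2 + s ^ 2
        = γ * ((a ^ 2 - c ^ 2) + (p ^ 2 + q ^ 2 + r ^ 2)) := by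
      linear_combination (H1 + H2) / 2 + (γ - d0 ^ 2) * hA2
    have hsum2 : (b ^ 2 - c ^ 2) * d1 ^ 2 + s ^ 2
        = γ * ((b ^ 2 - c ^ 2) + (p ^ 2 + q ^ 2 + r ^ 2)) := by
      linear_combination (H3 + H4) / 2 + (γ - d1 ^ 2) * hB2
    -- d0 * d1 = 0
    have e56 : A * B * (d0 * d1) = 0 := by
      linear_combination (H5 - H6) * 25 / 48 + 5 / 3 * B * hd1s
    have hdd : d0 * d1 = 0 := by
      rcases mul_eq_zero.mp e56 with h' | h'
      · exact absurd h' (mul_pos hApos hBpos).ne'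
      · exact h'
    have hR : 0 < (A - p) ^ 2 + (0 - q) ^ 2 + r ^ 2 := by
      have t1 := sq_nonneg (A - p); have t2 := sq_nonneg (0 - q)
      linarith only [t1, t2, hr2]
    have hγ : 0 ≤ γ := by
      have h0 : 0 ≤ γ * ((A - p) ^ 2 + (0 - q) ^ 2 + r ^ 2) := by
        rw [← H1]; positivity
      exact le_of_not_gt fun hg => absurd h0 (not_le.mpr (mul_neg_of_neg_of_pos hg hR))
    have hd1z : d1 = 0 := by
      rcases mul_eq_zero.mp hdd with h0 | h1
      · have hb : (b ^ 2 - c ^ 2) * d1 ^ 2 = -(γ * (a ^ 2 - b ^ 2)) := by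
          linear_combination hsum2 - hsum1 + (a ^ 2 - c ^ 2) * d0 * h0
        have hz1 : (b ^ 2 - c ^ 2) * d1 ^ 2 ≤ 0 := by
          rw [hb]; exact neg_nonpos.mpr (mul_nonneg hγ hφ.le)
        have hz2 : 0 ≤ (b ^ 2 - c ^ 2) * d1 ^ 2 := mul_nonneg hβ.le (sq_nonneg d1)
        have hz : (b ^ 2 - c ^ 2) * d1 ^ 2 = 0 := le_antisymm hz1 hz2
        exact pow_eq_zero_iff (two_ne_zero) |>.mp
          ((mul_eq_zero.mp hz).resolve_left hβ.ne')
      · exact h1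
    have hq0γ : γ * q = 0 := by linear_combination s * hd1z - hd1s
    have hαd0 : (a ^ 2 - c ^ 2) * d0 ^ 2 = γ * (a ^ 2 - b ^ 2) := by
      linear_combination hsum1 - hsum2 + (b ^ 2 - c ^ 2) * d1 * hd1z
    have hγpos : 0 < γ := by
      rcases hγ.lt_or_eq with h' | h'
      · exact h'
      · exfalso
        have hd0z : d0 = 0 := by
          have h0 : (a ^ 2 - c ^ 2) * d0 ^ 2 = 0 := by rw [hαd0, ← h']; ring
          exact pow_eq_zero_iff (two_ne_zero) |>.mp
            ((mul_eq_zero.mp h0).resolve_left hα.ne')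
        have hsz : s = 0 := by
          have h0 : s ^ 2 = 0 := by
            linear_combination hsum2 - (b ^ 2 - c ^ 2) * d1 * hd1z
              - ((b ^ 2 - c ^ 2) + (p ^ 2 + q ^ 2 + r ^ 2)) * h'
          exact pow_eq_zero_iff (two_ne_zero) |>.mp h0
        have hd2 : d2 ^ 2 = 1 := by
          linear_combination hdu - d0 * hd0z - d1 * hd1z
        have hrd2 : r * d2 = 0 := by
          linear_combination hsz - hs - p * hd0z - q * hd1z
        have h2' : (r * d2) ^ 2 = 0 := by rw [hrd2]; norm_num
        have hr0 : r ^ 2 = 0 := by linear_combination h2' - r ^ 2 * hd2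
        exact hr2.ne' hr0
    have hqz : q = 0 := by
      rcases mul_eq_zero.mp hq0γ with h' | h'
      · exact absurd h' hγpos.ne'
      · exact h'
    have hss : s ^ 2 = γ * ((b ^ 2 - c ^ 2) + p ^ 2 + r ^ 2) := by
      linear_combination hsum2 - (b ^ 2 - c ^ 2) * d1 * hd1z + γ * q * hqz
    have hsq : (d0 * s) ^ 2 = (γ * p) ^ 2 := by rw [hd0s]
    have E : (a ^ 2 - b ^ 2) * ((b ^ 2 - c ^ 2) + p ^ 2 + r ^ 2)
        = (a ^ 2 - c ^ 2) * p ^ 2 := by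
      have hgg : γ ^ 2 ≠ 0 := pow_ne_zero 2 hγpos.ne'
      apply mul_left_cancel₀ hgg
      linear_combination (a ^ 2 - c ^ 2) * hsq - γ * (a ^ 2 - b ^ 2) * hss
        - s ^ 2 * hαd0
    refine ⟨?_, hqz⟩
    field_simp [hφ.ne', hβ.ne']
    linear_combination -E
  · rintro ⟨h1, h2⟩
    have hvh : p ^ 2 * (b ^ 2 - c ^ 2) - r ^ 2 * (a ^ 2 - b ^ 2)
        = (a ^ 2 - b ^ 2) * (b ^ 2 - c ^ 2) := by
      field_simp [hφ.ne', hβ.ne'] at h1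
      linear_combination h1
    set u : EuclideanSpace ℝ (Fin 3) := WithLp.toLp 2 ![r * (a ^ 2 - b ^ 2), 0, p * (b ^ 2 - c ^ 2)] with hu
    have hu0 : u 0 = r * (a ^ 2 - b ^ 2) := rfl
    have hu1 : u 1 = 0 := rfl
    have hu2 : u 2 = p * (b ^ 2 - c ^ 2) := rfl
    have hune : u ≠ 0 := by
      intro h0
      apply hv
      have : u 0 = 0 := by rw [h0]; rfl
      rw [hu0] at this
      rcases mul_eq_zero.mp this with h' | h'
      · exact h'
      · exact absurd h' hφ.ne'
    have hQ : (0:ℝ) < r ^ 2 * (a ^ 2 - b ^ 2) ^ 2 + p ^ 2 * (b ^ 2 - c ^ 2) ^ 2 := by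
      nlinarith [sq_nonneg (p * (b ^ 2 - c ^ 2)), mul_pos hr2 (pow_pos hφ 2)]
    have hnu : ‖u‖ ^ 2 = r ^ 2 * (a ^ 2 - b ^ 2) ^ 2 + p ^ 2 * (b ^ 2 - c ^ 2) ^ 2 := by
      rw [nsq3, hu0, hu1, hu2]; ring
    refine ⟨‖u‖⁻¹ • u, norm_smul_inv_norm hune,
      (a ^ 2 - c ^ 2) * r ^ 2 * (a ^ 2 - b ^ 2)
        / (r ^ 2 * (a ^ 2 - b ^ 2) ^ 2 + p ^ 2 * (b ^ 2 - c ^ 2) ^ 2), ?_⟩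
    intro e he1 he2
    have he' : (e 0) ^ 2 * (b ^ 2 - c ^ 2) + (e 1) ^ 2 * (a ^ 2 - c ^ 2)
        = (a ^ 2 - c ^ 2) * (b ^ 2 - c ^ 2) := by
      field_simp [hα.ne', hβ.ne'] at he1
      linear_combination he1
    rw [real_inner_smul_right, mul_pow, inv_pow, hnu, inner3, nsq3]
    simp only [PiLp.sub_apply, hu0, hu1, hu2, he2, ← hp, ← hq, ← hr, h2]
    field_simp
    linear_combination (-(a ^ 2 - b ^ 2) * r ^ 2) * he' + (a ^ 2 - c ^ 2) * r ^ 2 * hvh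
end
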